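/- arXiv:1008.1622 — 3 statements merged into one kernel-verified Lean document; each statement's English description precedes it below -/
import Mathlib

section
/- Consider a mass-action system such that every solution x(t) of x' = f(x) with x(0) = x_0 ∈ ℝ_{>0}^m is defined and bounded on [0, ∞). Suppose that for every semi-locking set I there exists α_I ∈ ℝ^m with (α_I)_i < 0 for all i ∈ I and (α_I)_i = 0 for all i ∉ I, such that for every compact subset K of L_I there is a relatively open neighbourhood U of K in ℝ_{≥0}^m with ⟨α_I, f(x)⟩ ≤ 0 for all x ∈ U. Then for every x_0 ∈ ℝ_{>0}^m, the ω-limit set ω(x_0) of the solution starting at x_0 contains no point of the boundary of the positive orthant; that is, ω(x_0) contains no point of ℝ_{≥0}^m having a zero coordinate. -/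
open Filter Topology

noncomputable section

/-- The monomial `x^z = ∏ l, x l ^ z l`. -/
def mono {m : ℕ} (zv : Fin m → ℕ) (x : Fin m → ℝ) : ℝ := ∏ l, x l ^ zv l

/-- The ratio monomial `(x/x*)^z = ∏ l, (x l / x* l) ^ z l`. -/
def ratio {m : ℕ} (xstar x : Fin m → ℝ) (zv : Fin m → ℕ) : ℝ :=
  ∏ l, (x l / xstar l) ^ zv l

/-- The mass-action vector field `f(x) = Σ_{i,j} k(i,j) (z_j - z_i) x^{z_i}`
(terms with `k i j = 0` vanish, so this is the sum over reactions). -/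
def maf {m n : ℕ} (z : Fin n → Fin m → ℕ) (k : Fin n → Fin n → ℝ) (x : Fin m → ℝ) :
    Fin m → ℝ :=
  fun l => ∑ i, ∑ j, k i j * ((z j l : ℝ) - (z i l : ℝ)) * mono (z i) x

/-- `x*` is a complex balanced equilibrium. -/
def complexBalanced {m n : ℕ} (z : Fin n → Fin m → ℕ) (k : Fin n → Fin n → ℝ)
    (xstar : Fin m → ℝ) : Prop :=
  ∀ i, ∑ j, k j i * mono (z j) xstar = mono (z i) xstar * ∑ j, k i j

/-- Cyclic successor on `Fin n`. -/
def cyc {n : ℕ} (i : Fin n) : Fin n := ⟨(i.val + 1) % n, Nat.mod_lt _ i.pos⟩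

/-- The system is cyclic: its reactions are exactly `C_i → C_{i+1}` (cyclically). -/
def isCyclic {n : ℕ} (k : Fin n → Fin n → ℝ) : Prop :=
  (∀ i, 0 < k i (cyc i)) ∧ ∀ i j, j ≠ cyc i → k i j = 0

/-- Inclusion `Fin (n-1) → Fin n`. -/
def emb {n : ℕ} (i : Fin (n - 1)) : Fin n := ⟨i.val, by have := i.isLt; omega⟩

/-- Successor inclusion `Fin (n-1) → Fin n`, `i ↦ i+1`. -/
def embS {n : ℕ} (i : Fin (n - 1)) : Fin n := ⟨i.val + 1, by have := i.isLt; omega⟩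

/-- The stratum associated with a permutation `μ` of the complexes. -/
def stratum {m n : ℕ} (z : Fin n → Fin m → ℕ) (xstar : Fin m → ℝ)
    (μ : Equiv.Perm (Fin n)) : Set (Fin m → ℝ) :=
  {x | (∀ l, 0 < x l) ∧
    ∀ i : Fin (n - 1), ratio xstar x (z (μ (emb i))) > ratio xstar x (z (μ (embS i)))}

/-- `L_I`: the relative interior of the face of the nonnegative orthant given by `I`. -/
def LI {m : ℕ} (I : Finset (Fin m)) : Set (Fin m → ℝ) :=
  {x | (∀ i ∈ I, x i = 0) ∧ ∀ i ∉ I, 0 < x i}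

/-- Semi-locking set. -/
def semiLocking {m n : ℕ} (z : Fin n → Fin m → ℕ) (k : Fin n → Fin n → ℝ)
    (I : Finset (Fin m)) : Prop :=
  I.Nonempty ∧ ∀ i j : Fin n, 0 < k i j → (∃ l ∈ I, 0 < z j l) → ∃ l ∈ I, 0 < z i l

/-- The stoichiometric subspace. -/
def stoich {m n : ℕ} (z : Fin n → Fin m → ℕ) (k : Fin n → Fin n → ℝ) :
    Submodule ℝ (Fin m → ℝ) :=
  Submodule.span ℝ {v | ∃ i j : Fin n, 0 < k i j ∧ v = fun l => (z j l : ℝ) - (z i l : ℝ)}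

namespace S9

variable {m n : ℕ}


variable {m n : ℕ}

lemma mono_nonneg (zv : Fin m → ℕ) {p : Fin m → ℝ} (hp : ∀ l, 0 ≤ p l) : 0 ≤ mono zv p :=
  Finset.prod_nonneg fun l _ => pow_nonneg (hp l) _

lemma continuous_mono (zv : Fin m → ℕ) : Continuous (mono zv) :=
  continuous_finset_prod _ fun l _ => (continuous_apply l).pow _

lemma continuous_maf_l (z : Fin n → Fin m → ℕ) (k : Fin n → Fin n → ℝ) (l : Fin m) :
    Continuous fun p => maf z k p l :=
  continuous_finset_sum _ fun i _ => continuous_finset_sum _ fun j _ =>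
    continuous_const.mul (continuous_mono (z i))

lemma continuous_maf (z : Fin n → Fin m → ℕ) (k : Fin n → Fin n → ℝ) :
    Continuous (maf z k) := continuous_pi (continuous_maf_l z k)

lemma hasDerivAt_coord {x : ℝ → Fin m → ℝ} {v : Fin m → ℝ} {t : ℝ}
    (h : HasDerivAt x v t) (l : Fin m) : HasDerivAt (fun s => x s l) (v l) t :=
  hasDerivAt_pi.1 h l

lemma mono_le_aux {p : Fin m → ℝ} {C' : ℝ} (h1 : 1 ≤ C') (hp0 : ∀ r, 0 ≤ p r)
    (hpC : ∀ r, p r ≤ C') {zv : Fin m → ℕ} {D : ℕ} (hD : ∑ r, zv r ≤ D)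
    {l : Fin m} (hl : zv l ≠ 0) :
    mono zv p ≤ p l * (C' ^ D * C' ^ D) := by
  have h0 : (0:ℝ) ≤ C' := le_trans zero_le_one h1
  have hkey : mono zv p = p l ^ zv l * ∏ r ∈ Finset.univ.erase l, p r ^ zv r :=
    (Finset.mul_prod_erase _ _ (Finset.mem_univ l)).symm
  have hzl_le : zv l ≤ D :=
    le_trans (Finset.single_le_sum (fun r _ => Nat.zero_le _) (Finset.mem_univ l)) hD
  obtain ⟨q, hq⟩ : ∃ q, zv l = q + 1 := ⟨zv l - 1, by omega⟩
  have hA : p l ^ zv l ≤ p l * C' ^ D := by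
    rw [hq, pow_succ]
    have h2 : p l ^ q ≤ C' ^ q := pow_le_pow_left₀ (hp0 l) (hpC l) q
    have h3 : C' ^ q ≤ C' ^ D := pow_le_pow_right₀ h1 (by omega)
    calc p l ^ q * p l ≤ C' ^ D * p l := by
          exact mul_le_mul_of_nonneg_right (le_trans h2 h3) (hp0 l)
      _ = p l * C' ^ D := mul_comm _ _
  have hB : ∏ r ∈ Finset.univ.erase l, p r ^ zv r ≤ C' ^ D := by
    calc ∏ r ∈ Finset.univ.erase l, p r ^ zv r
        ≤ ∏ r ∈ Finset.univ.erase l, C' ^ zv r :=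
          Finset.prod_le_prod (fun r _ => pow_nonneg (hp0 r) _)
            (fun r _ => pow_le_pow_left₀ (hp0 r) (hpC r) _)
      _ = C' ^ (∑ r ∈ Finset.univ.erase l, zv r) := Finset.prod_pow_eq_pow_sum _ _ _
      _ ≤ C' ^ D := pow_le_pow_right₀ h1
          (le_trans (Finset.sum_le_sum_of_subset (Finset.subset_univ _)) hD)
  rw [hkey]
  calc p l ^ zv l * ∏ r ∈ Finset.univ.erase l, p r ^ zv r
      ≤ (p l * C' ^ D) * C' ^ D :=
        mul_le_mul hA hB (Finset.prod_nonneg fun r _ => pow_nonneg (hp0 r) _)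
          (mul_nonneg (hp0 l) (pow_nonneg h0 _))
    _ = p l * (C' ^ D * C' ^ D) := mul_assoc _ _ _

lemma maf_ge (z : Fin n → Fin m → ℕ) (k : Fin n → Fin n → ℝ) (hknn : ∀ i j, 0 ≤ k i j)
    {p : Fin m → ℝ} {C' : ℝ} (h1 : 1 ≤ C') (hp0 : ∀ r, 0 ≤ p r) (hpC : ∀ r, p r ≤ C')
    {D : ℕ} (hD : ∀ i, ∑ r, z i r ≤ D) (l : Fin m) :
    -((∑ i, ∑ j, k i j) * ((D : ℝ) * (C' ^ D * C' ^ D)) * p l) ≤ maf z k p l := by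
  have hE : (0:ℝ) ≤ C' ^ D * C' ^ D :=
    mul_nonneg (pow_nonneg (le_trans zero_le_one h1) _) (pow_nonneg (le_trans zero_le_one h1) _)
  have key : ∀ i j : Fin n,
      -(k i j * ((D : ℝ) * (C' ^ D * C' ^ D)) * p l)
        ≤ k i j * ((z j l : ℝ) - (z i l : ℝ)) * mono (z i) p := by
    intro i j
    have hk := hknn i j
    have hmn : 0 ≤ mono (z i) p := mono_nonneg _ hp0
    have hzjl : (0:ℝ) ≤ (z j l : ℝ) := Nat.cast_nonneg _
    rcases Nat.eq_zero_or_pos (z i l) with h0 | hpos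
    · have : k i j * ((z j l : ℝ) - (z i l : ℝ)) * mono (z i) p
          = k i j * (z j l : ℝ) * mono (z i) p := by rw [h0]; push_cast; ring
      rw [this]
      have h2 : 0 ≤ k i j * (z j l : ℝ) * mono (z i) p :=
        mul_nonneg (mul_nonneg hk hzjl) hmn
      have h3 : 0 ≤ k i j * ((D : ℝ) * (C' ^ D * C' ^ D)) * p l :=
        mul_nonneg (mul_nonneg hk (mul_nonneg (Nat.cast_nonneg _) hE)) (hp0 l)
      linarith
    · have hm : mono (z i) p ≤ p l * (C' ^ D * C' ^ D) :=
        mono_le_aux h1 hp0 hpC (hD i) (Nat.pos_iff_ne_zero.mp hpos)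
      have hzil : (z i l : ℝ) ≤ (D : ℝ) := by
        exact_mod_cast le_trans
          (Finset.single_le_sum (f := fun r => z i r) (fun r _ => Nat.zero_le _)
            (Finset.mem_univ l)) (hD i)
      have hzil0 : (0:ℝ) ≤ (z i l : ℝ) := Nat.cast_nonneg _
      have hDnn : (0:ℝ) ≤ (D:ℝ) := Nat.cast_nonneg _
      nlinarith [mul_nonneg (mul_nonneg hk hzjl) hmn,
        mul_le_mul_of_nonneg_left hm (mul_nonneg hk hDnn),
        mul_le_mul_of_nonneg_right hzil (mul_nonneg hk hmn),
        mul_nonneg hk hmn, mul_nonneg (hp0 l) hE]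
  calc -((∑ i, ∑ j, k i j) * ((D : ℝ) * (C' ^ D * C' ^ D)) * p l)
      = ∑ i, ∑ j, -(k i j * ((D : ℝ) * (C' ^ D * C' ^ D)) * p l) := by
        rw [Finset.sum_mul, Finset.sum_mul, ← Finset.sum_neg_distrib]
        refine Finset.sum_congr rfl fun i _ => ?_
        rw [Finset.sum_mul, Finset.sum_mul, ← Finset.sum_neg_distrib]
    _ ≤ ∑ i, ∑ j, k i j * ((z j l : ℝ) - (z i l : ℝ)) * mono (z i) p :=
        Finset.sum_le_sum fun i _ => Finset.sum_le_sum fun j _ => key i j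
    _ = maf z k p l := rfl



lemma pos_invariant (z : Fin n → Fin m → ℕ) (k : Fin n → Fin n → ℝ)
    (hknn : ∀ i j, 0 ≤ k i j) {x : ℝ → Fin m → ℝ}
    (hx0 : ∀ l, 0 < x 0 l)
    (hode : ∀ t : ℝ, 0 ≤ t → HasDerivAt x (maf z k (x t)) t)
    {C : ℝ} (hC : ∀ t, 0 ≤ t → ∀ l, |x t l| ≤ C) :
    ∀ t, 0 ≤ t → ∀ l, 0 < x t l := by
  classical
  by_contra hcon
  push_neg at hcon
  obtain ⟨t0, ht0, l0, hl0⟩ := hcon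
  set C' : ℝ := max C 1 with hC'def
  have h1 : (1:ℝ) ≤ C' := le_max_right _ _
  set D : ℕ := Finset.univ.sup (fun i : Fin n => ∑ r, z i r) with hDdef
  have hD : ∀ i, ∑ r, z i r ≤ D := fun i => Finset.le_sup (f := fun i : Fin n => ∑ r, z i r) (Finset.mem_univ i)
  set M : ℝ := (∑ i, ∑ j, k i j) * ((D : ℝ) * (C' ^ D * C' ^ D)) with hMdef
  have hM0 : 0 ≤ M := by
    apply mul_nonneg
    · exact Finset.sum_nonneg fun i _ => Finset.sum_nonneg fun j _ => hknn i j
    · exact mul_nonneg (Nat.cast_nonneg _) (mul_nonneg (pow_nonneg (by linarith) _)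
        (pow_nonneg (by linarith) _))
  set S : Set ℝ := {t | t ∈ Set.Icc 0 t0 ∧ ∃ l, x t l ≤ 0} with hSdef
  have hSne : S.Nonempty := ⟨t0, ⟨ht0, le_refl _⟩, l0, hl0⟩
  have hSbdd : BddBelow S := ⟨0, fun t ht => ht.1.1⟩
  set ts : ℝ := sInf S with htsdef
  have hts0 : 0 ≤ ts := le_csInf hSne fun t ht => ht.1.1
  have htst0 : ts ≤ t0 := csInf_le hSbdd ⟨⟨ht0, le_refl _⟩, l0, hl0⟩
  -- approach sequence from the right
  have happrox : ∀ p : ℕ, ∃ t ∈ S, t < ts + 1 / (p + 1) := by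
    intro p
    by_contra hno
    push_neg at hno
    have : ts + 1 / (p + 1) ≤ ts := le_csInf hSne hno
    have hp : (0:ℝ) < 1 / (p + 1) := by positivity
    linarith
  choose u hu hult using happrox
  have huge : ∀ p, ts ≤ u p := fun p => csInf_le hSbdd (hu p)
  have hutend : Tendsto u atTop (𝓝 ts) := by
    have h1' : Tendsto (fun p : ℕ => ts + 1 / (p + 1 : ℝ)) atTop (𝓝 (ts + 0)) :=
      tendsto_const_nhds.add tendsto_one_div_add_atTop_nhds_zero_nat
    rw [add_zero] at h1'
    exact tendsto_of_tendsto_of_tendsto_of_le_of_le tendsto_const_nhds h1' huge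
      fun p => (hult p).le
  have hxts : ContinuousAt x ts := (hode ts hts0).continuousAt
  have hxu : Tendsto (fun p => x (u p)) atTop (𝓝 (x ts)) := hxts.tendsto.comp hutend
  -- pigeonhole a coordinate
  choose lw hlw using fun p => (hu p).2
  obtain ⟨ls, hls⟩ := Finite.exists_infinite_fiber lw
  have hfreq : ∃ᶠ p in atTop, x (u p) ls ≤ 0 := by
    have hinf : {p | lw p = ls}.Infinite := by
      rw [← Set.infinite_coe_iff] at *
      exact hls
    have := Nat.frequently_atTop_iff_infinite.mpr hinf
    exact this.mono fun p hp => hp ▸ hlw p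
  have hxtsls : x ts ls ≤ 0 := by
    have htt : Tendsto (fun p => x (u p) ls) atTop (𝓝 (x ts ls)) :=
      ((continuous_apply ls).continuousAt.tendsto).comp hxu
    exact isClosed_Iic.mem_of_frequently_of_tendsto hfreq htt
  -- before ts everything is positive
  have hbefore : ∀ t, 0 ≤ t → t < ts → ∀ l, 0 < x t l := by
    intro t ht htlt l
    by_contra hneg
    push_neg at hneg
    have : t ∈ S := ⟨⟨ht, le_trans htlt.le htst0⟩, l, hneg⟩
    exact absurd (csInf_le hSbdd this) (not_le.mpr htlt)
  -- Gronwall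
  set g : ℝ → ℝ := fun t => x t ls * Real.exp (M * t) with hgdef
  have hgd : ∀ t, 0 ≤ t → HasDerivAt g
      (maf z k (x t) ls * Real.exp (M * t) + x t ls * (Real.exp (M * t) * M)) t := by
    intro t ht
    have hexp : HasDerivAt (fun s : ℝ => Real.exp (M * s)) (Real.exp (M * t) * M) t := by
      have h := ((hasDerivAt_id t).const_mul M).exp
      simpa using h
    exact (hasDerivAt_coord (hode t ht) ls).mul hexp
  have hgmono : MonotoneOn g (Set.Icc 0 ts) := by
    apply monotoneOn_of_deriv_nonneg (convex_Icc 0 ts)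
    · intro t ht
      exact ((hgd t ht.1).continuousAt).continuousWithinAt
    · intro t ht
      rw [interior_Icc] at ht
      exact ((hgd t ht.1.le).differentiableAt).differentiableWithinAt
    · intro t ht
      rw [interior_Icc] at ht
      rw [(hgd t ht.1.le).deriv]
      have hpos' : ∀ r, 0 < x t r := hbefore t ht.1.le ht.2 
      have hp0 : ∀ r, 0 ≤ x t r := fun r => (hpos' r).le
      have hpC : ∀ r, x t r ≤ C' := fun r =>
        le_trans (le_of_abs_le (hC t ht.1.le r)) (le_max_left _ _)
      have hge := maf_ge z k hknn h1 hp0 hpC hD ls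
      rw [← hMdef] at hge
      have hexp : (0:ℝ) < Real.exp (M * t) := Real.exp_pos _
      nlinarith [mul_le_mul_of_nonneg_right hge hexp.le]
  have hg0 : 0 < g 0 := by
    have : g 0 = x 0 ls := by simp [hgdef]
    rw [this]; exact hx0 ls
  have hgts : g ts ≤ 0 := by
    have : (0:ℝ) < Real.exp (M * ts) := Real.exp_pos _
    exact mul_nonpos_of_nonpos_of_nonneg hxtsls this.le
  have := hgmono (Set.mem_Icc.mpr ⟨le_refl 0, hts0⟩) (Set.mem_Icc.mpr ⟨hts0, le_refl ts⟩) hts0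
  linarith


lemma semilock_of_omega (z : Fin n → Fin m → ℕ) (k : Fin n → Fin n → ℝ)
    (hknn : ∀ i j, 0 ≤ k i j) {x : ℝ → Fin m → ℝ}
    (hode : ∀ t : ℝ, 0 ≤ t → HasDerivAt x (maf z k (x t)) t)
    {C : ℝ}
    (hxball : ∀ t, 0 ≤ t → x t ∈ Metric.closedBall (0 : Fin m → ℝ) C)
    (hpos : ∀ t, 0 ≤ t → ∀ l, 0 < x t l)
    {w : Fin m → ℝ} {s : ℕ → ℝ} (hs : Tendsto s atTop atTop)
    (hxs : Tendsto (fun j => x (s j)) atTop (𝓝 w))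
    (hw0 : ∀ l, 0 ≤ w l) {I : Finset (Fin m)} (hI : ∀ i, i ∈ I ↔ w i = 0)
    (hIne : I.Nonempty) : semiLocking z k I := by
  classical
  refine ⟨hIne, ?_⟩
  intro i j hkij hzj
  obtain ⟨l, hlI, hzjl⟩ := hzj
  by_contra hno
  push_neg at hno
  have hno' : ∀ l' ∈ I, z i l' = 0 := fun l' hl' => Nat.le_zero.mp (hno l' hl')
  have hwl : w l = 0 := (hI l).mp hlI
  -- the terms of maf at w are all nonnegative, and the (i,j) term is positive
  set F : Fin n → Fin n → ℝ :=
    fun a b => k a b * ((z b l : ℝ) - (z a l : ℝ)) * mono (z a) w with hFdef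
  have hterm : ∀ a b, 0 ≤ F a b := by
    intro a b
    rcases Nat.eq_zero_or_pos (z a l) with h0 | hposa
    · have : F a b = k a b * (z b l : ℝ) * mono (z a) w := by
        rw [hFdef]; simp only; rw [h0]; push_cast; ring
      rw [this]
      exact mul_nonneg (mul_nonneg (hknn a b) (Nat.cast_nonneg _)) (mono_nonneg _ hw0)
    · have : mono (z a) w = 0 := by
        apply Finset.prod_eq_zero (Finset.mem_univ l)
        rw [hwl]
        exact zero_pow (Nat.pos_iff_ne_zero.mp hposa)
      simp [hFdef, this]
  have hmonopos : 0 < mono (z i) w := by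
    apply Finset.prod_pos
    intro r _
    rcases Nat.eq_zero_or_pos (z i r) with h0 | hposr
    · rw [h0]; simp
    · apply pow_pos
      rcases lt_or_eq_of_le (hw0 r) with h | h
      · exact h
      · exfalso
        have : r ∈ I := (hI r).mpr h.symm
        have := hno' r this
        omega
  have hFij : 0 < F i j := by
    have hzil : z i l = 0 := hno' l hlI
    have : F i j = k i j * (z j l : ℝ) * mono (z i) w := by
      rw [hFdef]; simp only; rw [hzil]; push_cast; ring
    rw [this]
    apply mul_pos (mul_pos hkij _) hmonopos
    exact_mod_cast hzjl
  have hc0 : 0 < maf z k w l := by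
    have h1 : F i j ≤ ∑ b, F i b :=
      Finset.single_le_sum (fun b _ => hterm i b) (Finset.mem_univ j)
    have h2 : ∑ b, F i b ≤ ∑ a, ∑ b, F a b :=
      Finset.single_le_sum (f := fun a => ∑ b, F a b)
        (fun a _ => Finset.sum_nonneg fun b _ => hterm a b) (Finset.mem_univ i)
    have : maf z k w l = ∑ a, ∑ b, F a b := rfl
    linarith
  set c0 : ℝ := maf z k w l with hc0def
  -- a ball around w where the l-th component of the field is at least c0/2
  have hball : ∃ r > 0, ∀ p : Fin m → ℝ, dist p w ≤ r → c0 / 2 ≤ maf z k p l := by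
    have hcont := (continuous_maf_l z k l).continuousAt (x := w)
    have hev : ∀ᶠ p in 𝓝 w, maf z k p l ∈ Set.Ioi (c0 / 2) :=
      hcont (isOpen_Ioi.mem_nhds (by rw [Set.mem_Ioi]; linarith))
    rw [Metric.eventually_nhds_iff_ball] at hev
    obtain ⟨ε, hε, hb⟩ := hev
    exact ⟨ε / 2, by linarith, fun p hp =>
      (hb p (by rw [Metric.mem_ball]; linarith)).le⟩
  obtain ⟨r, hr, hrball⟩ := hball
  -- speed bound
  obtain ⟨M0, hM0⟩ := (isCompact_closedBall (0 : Fin m → ℝ) C).exists_bound_of_continuousOn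
    (continuous_maf z k).continuousOn
  set M : ℝ := max M0 1 with hMdef
  have hM1 : (1:ℝ) ≤ M := le_max_right _ _
  have hMpos : (0:ℝ) < M := lt_of_lt_of_le one_pos hM1
  have hMb : ∀ t, 0 ≤ t → ‖maf z k (x t)‖ ≤ M :=
    fun t ht => le_trans (hM0 _ (hxball t ht)) (le_max_left _ _)
  set τ : ℝ := r / (2 * M) with hτdef
  have hτpos : 0 < τ := div_pos hr (by linarith)
  -- pick a good time
  have hev1 : ∀ᶠ j' in atTop, τ ≤ s j' := hs.eventually (eventually_ge_atTop τ)
  have hmin : (0:ℝ) < min (r / 2) (c0 * τ / 8) := by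
    apply lt_min (by linarith)
    positivity
  have hev2 : ∀ᶠ j' in atTop, dist (x (s j')) w < min (r / 2) (c0 * τ / 8) :=
    (Metric.tendsto_nhds.mp hxs) _ hmin
  obtain ⟨j', hj'1, hj'2⟩ := (hev1.and hev2).exists
  set t1 : ℝ := s j' with ht1def
  have ht1τ : τ ≤ t1 := hj'1
  have ht10 : 0 ≤ t1 := le_trans hτpos.le ht1τ
  have hdist : dist (x t1) w ≤ min (r / 2) (c0 * τ / 8) := hj'2.le
  have hxt1l : x t1 l ≤ c0 * τ / 8 := by
    have h1 : dist (x t1 l) (w l) ≤ dist (x t1) w := dist_le_pi_dist _ _ l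
    rw [hwl] at h1
    have : |x t1 l| ≤ min (r / 2) (c0 * τ / 8) := by
      rw [Real.dist_eq, sub_zero] at h1; exact le_trans h1 hdist
    exact le_trans (le_of_abs_le this) (min_le_right _ _)
  by_cases hcase : ∀ v ∈ Set.Icc (t1 - τ) t1, x v ∈ Metric.closedBall w r
  · -- the coordinate grows at rate c0/2
    set φ : ℝ → ℝ := fun v => x v l - c0 / 2 * v with hφdef
    have hφmono : MonotoneOn φ (Set.Icc (t1 - τ) t1) := by
      apply monotoneOn_of_deriv_nonneg (convex_Icc _ _)
      · intro v hv
        have hv0 : 0 ≤ v := le_trans (by linarith) hv.1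
        exact (((hasDerivAt_coord (hode v hv0) l).sub
          ((hasDerivAt_id v).const_mul (c0/2))).continuousAt).continuousWithinAt
      · intro v hv
        rw [interior_Icc] at hv
        have hv0 : 0 ≤ v := le_trans (by linarith) hv.1.le
        exact (((hasDerivAt_coord (hode v hv0) l).sub
          ((hasDerivAt_id v).const_mul (c0/2))).differentiableAt).differentiableWithinAt
      · intro v hv
        rw [interior_Icc] at hv
        have hv0 : 0 ≤ v := le_trans (by linarith) hv.1.le
        have hd := ((hasDerivAt_coord (hode v hv0) l).sub
          ((hasDerivAt_id v).const_mul (c0/2)))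
        have hd' : HasDerivAt φ (maf z k (x v) l - c0 / 2) v := by
          rw [mul_one] at hd; exact hd
        rw [hd'.deriv]
        have hin : x v ∈ Metric.closedBall w r := hcase v ⟨hv.1.le, hv.2.le⟩
        have := hrball (x v) (by rwa [Metric.mem_closedBall] at hin)
        linarith
    have h1 := hφmono ⟨le_refl _, by linarith⟩ ⟨by linarith, le_refl _⟩ (by linarith)
    have h2 : 0 < x (t1 - τ) l := hpos (t1 - τ) (by linarith) l
    simp only [hφdef] at h1
    -- x t1 l ≥ x (t1-τ) l + c0/2 * τ
    nlinarith
  · push_neg at hcase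
    obtain ⟨v, hv, hvout⟩ := hcase
    have hv0 : 0 ≤ v := le_trans (by linarith) hv.1
    -- Lipschitz estimate on [t1 - τ, t1]
    have hlip : ‖x t1 - x v‖ ≤ M * ‖t1 - v‖ := by
      apply Convex.norm_image_sub_le_of_norm_hasDerivWithin_le
        (f' := fun t => maf z k (x t)) (s := Set.Icc (t1 - τ) t1)
      · intro t ht
        exact (hode t (le_trans (by linarith) ht.1)).hasDerivWithinAt
      · intro t ht
        exact hMb t (le_trans (by linarith) ht.1)
      · exact convex_Icc _ _
      · exact hv
      · exact ⟨by linarith, le_refl _⟩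
    have hd1 : dist (x v) (x t1) ≤ M * τ := by
      rw [dist_eq_norm]
      have h1 : ‖t1 - v‖ ≤ τ := by
        rw [Real.norm_eq_abs, abs_le]
        constructor <;> [linarith [hv.2]; linarith [hv.1]]
      calc ‖x v - x t1‖ = ‖x t1 - x v‖ := by rw [norm_sub_rev]
        _ ≤ M * ‖t1 - v‖ := hlip
        _ ≤ M * τ := by nlinarith
    have hMτ : M * τ = r / 2 := by
      rw [hτdef]; field_simp
    have : dist (x v) w ≤ r := by
      calc dist (x v) w ≤ dist (x v) (x t1) + dist (x t1) w := dist_triangle _ _ _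
        _ ≤ M * τ + min (r / 2) (c0 * τ / 8) := add_le_add hd1 hdist
        _ ≤ r / 2 + r / 2 := by rw [hMτ]; exact add_le_add le_rfl (min_le_left _ _)
        _ = r := by ring
    exact hvout (Metric.mem_closedBall.mpr this)


end S9

/-- a mass-action system with bounded solutions, such that for every
semi-locking set `I` there is a vector `α_I` (negative on `I`, zero off `I`) with
`⟨α_I, f⟩ ≤ 0` on a relatively open neighbourhood in `ℝ_{≥0}^m` of every compact subset
of `L_I`, has no ω-limit point on the boundary of the positive orthant. -/
theorem stmt9 {m n : ℕ} (z : Fin n → Fin m → ℕ) (hz : Function.Injective z)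
    (k : Fin n → Fin n → ℝ) (hknn : ∀ i j, 0 ≤ k i j) (hkd : ∀ i, k i i = 0)
    (hbdd : ∀ x : ℝ → Fin m → ℝ, (∀ l, 0 < x 0 l) →
      (∀ t : ℝ, 0 ≤ t → HasDerivAt x (maf z k (x t)) t) →
      ∃ C : ℝ, ∀ t : ℝ, 0 ≤ t → ∀ l, |x t l| ≤ C)
    (hα : ∀ I : Finset (Fin m), semiLocking z k I →
      ∃ α : Fin m → ℝ, (∀ i ∈ I, α i < 0) ∧ (∀ i ∉ I, α i = 0) ∧
        ∀ K : Set (Fin m → ℝ), K ⊆ LI I → IsCompact K →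
          ∃ V : Set (Fin m → ℝ), IsOpen V ∧ K ⊆ V ∧
            ∀ x ∈ V, (∀ l, 0 ≤ x l) → ∑ l, α l * maf z k x l ≤ 0) :
    ∀ x : ℝ → Fin m → ℝ, (∀ l, 0 < x 0 l) →
      (∀ t : ℝ, 0 ≤ t → HasDerivAt x (maf z k (x t)) t) →
      ∀ y : Fin m → ℝ, (∀ l, 0 ≤ y l) → (∃ l, y l = 0) →
        ¬ ∃ tk : ℕ → ℝ, Tendsto tk atTop atTop ∧
            Tendsto (fun j => x (tk j)) atTop (𝓝 y) := by
  classical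
  intro x hx0 hode y hy0 hyzero
  rintro ⟨tk, htk, hxy⟩
  obtain ⟨C0, hC0⟩ := hbdd x hx0 hode
  set C : ℝ := max C0 0 with hCdef
  have hCb : ∀ t, 0 ≤ t → ∀ l, |x t l| ≤ C :=
    fun t ht l => le_trans (hC0 t ht l) (le_max_left _ _)
  have hCnn : (0:ℝ) ≤ C := le_max_right _ _
  have hpos : ∀ t, 0 ≤ t → ∀ l, 0 < x t l := S9.pos_invariant z k hknn hx0 hode hCb
  have hxball : ∀ t, 0 ≤ t → x t ∈ Metric.closedBall (0 : Fin m → ℝ) C := by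
    intro t ht
    rw [Metric.mem_closedBall, dist_zero_right]
    exact (pi_norm_le_iff_of_nonneg hCnn).mpr
      (fun l => by rw [Real.norm_eq_abs]; exact hCb t ht l)
  set Ω : Set (Fin m → ℝ) := {w | ∃ s : ℕ → ℝ, Tendsto s atTop atTop ∧
      Tendsto (fun j => x (s j)) atTop (𝓝 w)} with hΩdef
  have hyΩ : y ∈ Ω := ⟨tk, htk, hxy⟩
  have hΩball : Ω ⊆ Metric.closedBall 0 C := by
    rintro w ⟨s, hs, hxs⟩
    apply Metric.isClosed_closedBall.mem_of_tendsto hxs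
    filter_upwards [hs.eventually (eventually_ge_atTop 0)] with j hj
    exact hxball _ hj
  have hΩpos : ∀ w ∈ Ω, ∀ l, 0 ≤ w l := by
    rintro w ⟨s, hs, hxs⟩ l
    have htt : Tendsto (fun j => x (s j) l) atTop (𝓝 (w l)) :=
      ((continuous_apply l).continuousAt.tendsto).comp hxs
    apply ge_of_tendsto htt
    filter_upwards [hs.eventually (eventually_ge_atTop 0)] with j hj
    exact (hpos _ hj l).le
  have hΩclosed : IsClosed Ω := by
    apply IsSeqClosed.isClosed
    intro u p hu hup
    have key : ∀ nn : ℕ, ∃ t : ℝ, (nn:ℝ) ≤ t ∧ dist (x t) (u nn) ≤ 1 / (nn + 1) := by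
      intro nn
      obtain ⟨s, hs, hxs⟩ := hu nn
      have h1 : ∀ᶠ j in atTop, (nn:ℝ) ≤ s j := hs.eventually (eventually_ge_atTop _)
      have h2 : ∀ᶠ j in atTop, dist (x (s j)) (u nn) < 1/(nn+1) :=
        Metric.tendsto_nhds.mp hxs _ (by positivity)
      obtain ⟨j, hj1, hj2⟩ := (h1.and h2).exists
      exact ⟨s j, hj1, hj2.le⟩
    choose τ hτ1 hτ2 using key
    refine ⟨τ, tendsto_atTop_mono hτ1 tendsto_natCast_atTop_atTop, ?_⟩
    rw [tendsto_iff_dist_tendsto_zero]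
    apply squeeze_zero (f := fun nn : ℕ => dist (x (τ nn)) p)
      (g := fun nn : ℕ => 1/((nn:ℝ)+1) + dist (u nn) p) (fun nn => dist_nonneg)
    · intro nn
      exact le_trans (dist_triangle _ (u nn) _) (add_le_add (hτ2 nn) (le_refl _))
    · have h1 : Tendsto (fun nn : ℕ => 1/((nn:ℝ)+1)) atTop (𝓝 0) :=
        tendsto_one_div_add_atTop_nhds_zero_nat
      have h2 := tendsto_iff_dist_tendsto_zero.mp hup
      simpa using h1.add h2
  have hΩcomp : IsCompact Ω :=
    (isCompact_closedBall (0 : Fin m → ℝ) C).of_isClosed_subset hΩclosed hΩball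
  -- choose a maximal zero set
  set F : Set (Finset (Fin m)) :=
    {J | J.Nonempty ∧ ∃ w ∈ Ω, ∀ i, i ∈ J ↔ w i = 0} with hFdef
  have hyF : (Finset.univ.filter (fun i => y i = 0)) ∈ F := by
    obtain ⟨l0, hl0⟩ := hyzero
    refine ⟨⟨l0, Finset.mem_filter.mpr ⟨Finset.mem_univ _, hl0⟩⟩, y, hyΩ, fun i => ?_⟩
    simp [Finset.mem_filter]
  obtain ⟨I, hIF, hImax0⟩ :=
    Set.Finite.exists_maximalFor Finset.card F (Set.toFinite F) ⟨_, hyF⟩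
  have hImax : ∀ J ∈ F, I.card ≤ J.card → I.card = J.card :=
    fun J hJ h => le_antisymm h (hImax0 hJ h)
  obtain ⟨hIne, wst, hwstΩ, hwstI⟩ := hIF
  obtain ⟨sk, hsk, hxsk⟩ := hwstΩ
  have hIsl : semiLocking z k I :=
    S9.semilock_of_omega z k hknn hode hxball hpos hsk hxsk
      (hΩpos wst ⟨sk, hsk, hxsk⟩) hwstI hIne
  obtain ⟨α, hαneg, hαzero, hαV⟩ := hα I hIsl
  set L : (Fin m → ℝ) → ℝ := fun p => ∑ l, α l * p l with hLdef
  have hLcont : Continuous L :=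
    continuous_finset_sum _ fun l _ => continuous_const.mul (continuous_apply l)
  have hαnonpos : ∀ l, α l ≤ 0 := by
    intro l
    by_cases h : l ∈ I
    · exact (hαneg l h).le
    · rw [hαzero l h]
  have hLnonpos : ∀ p : Fin m → ℝ, (∀ l, 0 ≤ p l) → L p ≤ 0 := fun p hp =>
    Finset.sum_nonpos fun l _ => mul_nonpos_of_nonpos_of_nonneg (hαnonpos l) (hp l)
  have hLneg : ∀ t, 0 ≤ t → L (x t) < 0 := by
    intro t ht
    have h1 : L (x t) = ∑ l ∈ I, α l * x t l := by
      refine (Finset.sum_subset (Finset.subset_univ I) ?_).symm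
      intro l _ hl; rw [hαzero l hl, zero_mul]
    rw [h1]
    have := Finset.sum_lt_sum_of_nonempty hIne
      (g := fun l => (0:ℝ))
      (fun l hl => mul_neg_of_neg_of_pos (hαneg l hl) (hpos t ht l))
    simpa using this
  -- the compact set K and the neighbourhood V
  set K : Set (Fin m → ℝ) := Ω ∩ {p | ∀ i ∈ I, p i = 0} with hKdef
  have hKsub : K ⊆ LI I := by
    rintro p ⟨hpΩ, hpz⟩
    refine ⟨hpz, ?_⟩
    intro i hiI
    set J : Finset (Fin m) := Finset.univ.filter (fun i => p i = 0) with hJdef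
    have hIJ : I ⊆ J := fun i' hi' =>
      Finset.mem_filter.mpr ⟨Finset.mem_univ _, hpz i' hi'⟩
    have hJF : J ∈ F := by
      obtain ⟨i0, hi0⟩ := hIne
      exact ⟨⟨i0, hIJ hi0⟩, p, hpΩ, fun i' => by simp [hJdef]⟩
    have hcard := hImax J hJF (Finset.card_le_card hIJ)
    have hIeqJ : I = J := Finset.eq_of_subset_of_card_le hIJ (le_of_eq hcard.symm)
    have hne : p i ≠ 0 := by
      intro h
      exact hiI (hIeqJ ▸ Finset.mem_filter.mpr ⟨Finset.mem_univ _, h⟩)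
    exact lt_of_le_of_ne (hΩpos p hpΩ i) (Ne.symm hne)
  have hKcl : IsClosed {p : Fin m → ℝ | ∀ i ∈ I, p i = 0} := by
    have heq : {p : Fin m → ℝ | ∀ i ∈ I, p i = 0} = ⋂ i ∈ I, {p | p i = 0} := by
      ext p; simp
    rw [heq]
    exact isClosed_biInter fun i _ => isClosed_eq (continuous_apply i) continuous_const
  have hKcomp : IsCompact K := hΩcomp.inter_right hKcl
  obtain ⟨V, hVopen, hKV, hVineq⟩ := hαV K hKsub hKcomp
  -- the region lemma
  have hρ : ∃ ρ > 0, ∀ p q : Fin m → ℝ, q ∈ Ω → dist p q ≤ ρ → -ρ ≤ L p → p ∈ V := by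
    by_contra hcon
    push_neg at hcon
    have key : ∀ nn : ℕ, ∃ p q : Fin m → ℝ, q ∈ Ω ∧ dist p q ≤ 1/(nn+1) ∧
        -(1/(nn+1)) ≤ L p ∧ p ∉ V := by
      intro nn
      obtain ⟨p, q, h⟩ := hcon (1/(nn+1)) (by positivity)
      exact ⟨p, q, h⟩
    choose p q hqΩ hdq hLp hpV using key
    obtain ⟨qi, hqiΩ, φ, hφ, hqtend⟩ := hΩcomp.tendsto_subseq hqΩ
    have hmono : ∀ nn : ℕ, 1/((φ nn : ℝ)+1) ≤ 1/((nn:ℝ)+1) := by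
      intro nn
      apply one_div_le_one_div_of_le (by positivity)
      have : nn ≤ φ nn := hφ.le_apply
      push_cast
      linarith [(Nat.cast_le (α := ℝ)).mpr this]
    have hptend : Tendsto (fun nn => p (φ nn)) atTop (𝓝 qi) := by
      rw [tendsto_iff_dist_tendsto_zero]
      apply squeeze_zero (f := fun nn : ℕ => dist (p (φ nn)) qi)
        (g := fun nn : ℕ => 1/((nn:ℝ)+1) + dist (q (φ nn)) qi) (fun nn => dist_nonneg)
      · intro nn
        exact le_trans (dist_triangle _ (q (φ nn)) _)
          (add_le_add (le_trans (hdq (φ nn)) (hmono nn)) (le_refl _))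
      · have h1 : Tendsto (fun nn : ℕ => 1/((nn:ℝ)+1)) atTop (𝓝 0) :=
          tendsto_one_div_add_atTop_nhds_zero_nat
        have h2 := tendsto_iff_dist_tendsto_zero.mp hqtend
        simpa using h1.add h2
    have hLqi : 0 ≤ L qi := by
      have h2 : Tendsto (fun nn => L (p (φ nn))) atTop (𝓝 (L qi)) :=
        (hLcont.continuousAt.tendsto).comp hptend
      have h3 : Tendsto (fun nn : ℕ => -(1/((nn:ℝ)+1))) atTop (𝓝 0) := by
        have := (tendsto_one_div_add_atTop_nhds_zero_nat :
          Tendsto (fun nn : ℕ => 1/((nn:ℝ)+1)) atTop (𝓝 0)).neg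
        simpa using this
      exact le_of_tendsto_of_tendsto' h3 h2
        (fun nn => le_trans (neg_le_neg (hmono nn)) (hLp (φ nn)))
    have hLqi0 : L qi = 0 := le_antisymm (hLnonpos qi (hΩpos qi hqiΩ)) hLqi
    have hqiK : qi ∈ K := by
      refine ⟨hqiΩ, ?_⟩
      intro i hiI
      have hterms : ∀ l ∈ Finset.univ, α l * qi l ≤ 0 := fun l _ =>
        mul_nonpos_of_nonpos_of_nonneg (hαnonpos l) (hΩpos qi hqiΩ l)
      have := (Finset.sum_eq_zero_iff_of_nonpos hterms).mp hLqi0 i (Finset.mem_univ i)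
      rcases mul_eq_zero.mp this with h | h
      · exact absurd h (ne_of_lt (hαneg i hiI))
      · exact h
    have hev : ∀ᶠ nn in atTop, p (φ nn) ∈ V :=
      hptend.eventually (hVopen.mem_nhds (hKV hqiK))
    obtain ⟨nn, hnn⟩ := hev.exists
    exact hpV (φ nn) hnn
  obtain ⟨ρ, hρpos, hρprop⟩ := hρ
  -- attraction to Ω
  have hattr : ∃ T : ℝ, 0 ≤ T ∧ ∀ t, T ≤ t → ∃ q ∈ Ω, dist (x t) q ≤ ρ := by
    by_contra hcon
    push_neg at hcon
    have key : ∀ nn : ℕ, ∃ t : ℝ, (nn:ℝ) ≤ t ∧ ∀ q ∈ Ω, ρ < dist (x t) q := by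
      intro nn
      obtain ⟨t, ht1, ht2⟩ := hcon (nn:ℝ) (Nat.cast_nonneg nn)
      exact ⟨t, ht1, ht2⟩
    choose tt htt hbad using key
    have htt0 : ∀ nn, (0:ℝ) ≤ tt nn := fun nn => le_trans (Nat.cast_nonneg nn) (htt nn)
    obtain ⟨qi, hqimem, φ, hφ, hqt⟩ :=
      (isCompact_closedBall (0 : Fin m → ℝ) C).tendsto_subseq
        (fun nn => hxball _ (htt0 nn))
    have hqiΩ : qi ∈ Ω := by
      refine ⟨fun nn => tt (φ nn), ?_, hqt⟩
      apply tendsto_atTop_mono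
        (fun nn => le_trans ((Nat.cast_le (α := ℝ)).mpr hφ.le_apply) (htt (φ nn)))
        tendsto_natCast_atTop_atTop
    obtain ⟨nn, hnn⟩ := ((Metric.tendsto_nhds.mp hqt) ρ hρpos).exists
    exact absurd hnn (not_lt.mpr (hbad (φ nn) qi hqiΩ).le)
  obtain ⟨T, hT0, hattr⟩ := hattr
  -- pick the starting time t₀
  have hLwst : L wst = 0 := Finset.sum_eq_zero fun l _ => by
    by_cases h : l ∈ I
    · rw [(hwstI l).mp h, mul_zero]
    · rw [hαzero l h, zero_mul]
  have hLtend : Tendsto (fun j => L (x (sk j))) atTop (𝓝 0) := by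
    have := (hLcont.continuousAt.tendsto).comp hxsk
    rwa [hLwst] at this
  have hev : ∀ᶠ j in atTop, T ≤ sk j ∧ -ρ < L (x (sk j)) :=
    (hsk.eventually (eventually_ge_atTop T)).and
      (hLtend.eventually (eventually_gt_nhds (by linarith)))
  obtain ⟨j0, hj0T, hj0L⟩ := hev.exists
  set t₀ : ℝ := sk j0 with ht₀def
  have ht₀0 : 0 ≤ t₀ := le_trans hT0 hj0T
  set c : ℝ := -(L (x t₀)) with hcdef
  have hcpos : 0 < c := by
    have := hLneg t₀ ht₀0
    rw [hcdef]; linarith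
  have hcρ : c < ρ := by rw [hcdef]; linarith
  set S : Set ℝ := {t | t₀ ≤ t ∧ -c < L (x t)} with hSdef
  have hSne : S.Nonempty := by
    have hev2 : ∀ᶠ j in atTop, t₀ ≤ sk j ∧ -c < L (x (sk j)) :=
      (hsk.eventually (eventually_ge_atTop t₀)).and
        (hLtend.eventually (eventually_gt_nhds (by linarith)))
    obtain ⟨j1, h1, h2⟩ := hev2.exists
    exact ⟨sk j1, h1, h2⟩
  have hSbdd : BddBelow S := ⟨t₀, fun t ht => ht.1⟩
  set u : ℝ := sInf S with hudef
  have hut₀ : t₀ ≤ u := le_csInf hSne fun t ht => ht.1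
  have hu0 : 0 ≤ u := le_trans ht₀0 hut₀
  have happrox : ∀ pp : ℕ, ∃ t ∈ S, t < u + 1 / (pp + 1) := by
    intro pp
    by_contra hno
    push_neg at hno
    have : u + 1 / (pp + 1) ≤ u := le_csInf hSne hno
    have hp : (0:ℝ) < 1 / (pp + 1) := by positivity
    linarith
  choose v hv hvlt using happrox
  have hvge : ∀ pp, u ≤ v pp := fun pp => csInf_le hSbdd (hv pp)
  have hvtend : Tendsto v atTop (𝓝 u) := by
    have h1 : Tendsto (fun pp : ℕ => u + 1 / ((pp:ℝ) + 1)) atTop (𝓝 (u + 0)) :=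
      tendsto_const_nhds.add tendsto_one_div_add_atTop_nhds_zero_nat
    rw [add_zero] at h1
    exact tendsto_of_tendsto_of_tendsto_of_le_of_le tendsto_const_nhds h1 hvge
      fun pp => (hvlt pp).le
  have hxu_cont : ContinuousAt x u := (hode u hu0).continuousAt
  have hLxv : Tendsto (fun pp => L (x (v pp))) atTop (𝓝 (L (x u))) :=
    ((hLcont.continuousAt.comp hxu_cont).tendsto).comp hvtend
  have hLu_ge : -c ≤ L (x u) :=
    ge_of_tendsto hLxv (Eventually.of_forall fun pp => ((hv pp).2).le)
  have hLu_le : L (x u) ≤ -c := by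
    rcases eq_or_lt_of_le hut₀ with heq | hlt
    · rw [← heq, hcdef, neg_neg]
    · have hnot : ∀ t, t₀ ≤ t → t < u → L (x t) ≤ -c := by
        intro t h1 h2
        by_contra hgt
        push_neg at hgt
        exact absurd (csInf_le hSbdd ⟨h1, hgt⟩) (not_le.mpr h2)
      set wseq : ℕ → ℝ := fun pp => max t₀ (u - 1/((pp:ℝ)+1)) with hwseqdef
      have hwle : ∀ pp, L (x (wseq pp)) ≤ -c := by
        intro pp
        apply hnot _ (le_max_left _ _)
        apply max_lt hlt
        have hp : (0:ℝ) < 1 / ((pp:ℝ) + 1) := by positivity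
        linarith
      have hwtend : Tendsto wseq atTop (𝓝 u) := by
        have h1 : Tendsto (fun pp : ℕ => u - 1/((pp:ℝ)+1)) atTop (𝓝 (u - 0)) :=
          tendsto_const_nhds.sub tendsto_one_div_add_atTop_nhds_zero_nat
        rw [sub_zero] at h1
        have h2 := (tendsto_const_nhds (x := t₀) (f := atTop (α := ℕ))).max h1
        rwa [max_eq_right hut₀] at h2
      have hLw : Tendsto (fun pp => L (x (wseq pp))) atTop (𝓝 (L (x u))) :=
        ((hLcont.continuousAt.comp hxu_cont).tendsto).comp hwtend
      exact le_of_tendsto hLw (Eventually.of_forall hwle)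
  have hxuV : x u ∈ V := by
    obtain ⟨q, hqΩ, hq⟩ := hattr u (le_trans hj0T hut₀)
    exact hρprop (x u) q hqΩ hq (by linarith)
  obtain ⟨η, hηpos, hηV⟩ : ∃ η > 0, ∀ t : ℝ, dist t u < η → x t ∈ V := by
    have h1 := hxu_cont (hVopen.mem_nhds hxuV)
    obtain ⟨ε, hε, hb⟩ := Metric.mem_nhds_iff.mp h1
    exact ⟨ε, hε, fun t ht => hb (Metric.mem_ball.mpr ht)⟩
  have hanti : AntitoneOn (fun t => L (x t)) (Set.Icc u (u + η/2)) := by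
    apply antitoneOn_of_deriv_nonpos (convex_Icc _ _)
    · intro t ht
      have ht0 : 0 ≤ t := le_trans hu0 ht.1
      exact (hLcont.continuousAt.comp (hode t ht0).continuousAt).continuousWithinAt
    · intro t ht
      rw [interior_Icc] at ht
      have ht0 : 0 ≤ t := le_trans hu0 ht.1.le
      have hd : HasDerivAt (fun t' => L (x t')) (∑ l, α l * maf z k (x t) l) t :=
        HasDerivAt.fun_sum (fun l _ => (S9.hasDerivAt_coord (hode t ht0) l).const_mul (α l))
      exact hd.differentiableAt.differentiableWithinAt
    · intro t ht
      rw [interior_Icc] at ht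
      have ht0 : 0 ≤ t := le_trans hu0 ht.1.le
      have hd : HasDerivAt (fun t' => L (x t')) (∑ l, α l * maf z k (x t) l) t :=
        HasDerivAt.fun_sum (fun l _ => (S9.hasDerivAt_coord (hode t ht0) l).const_mul (α l))
      rw [hd.deriv]
      apply hVineq
      · apply hηV
        rw [Real.dist_eq, abs_lt]
        constructor <;> [linarith [ht.1]; linarith [ht.2]]
      · exact fun l => (hpos t ht0 l).le
  obtain ⟨sS, hsS, hsSlt⟩ : ∃ sS ∈ S, sS < u + η/2 := by
    by_contra hno
    push_neg at hno
    have : u + η/2 ≤ u := le_csInf hSne hno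
    linarith
  have hsSu : u ≤ sS := csInf_le hSbdd hsS
  have hfin := hanti (Set.mem_Icc.mpr ⟨le_refl u, by linarith⟩)
    (Set.mem_Icc.mpr ⟨hsSu, hsSlt.le⟩) hsSu
  have h2 := hsS.2
  simp only at hfin
  linarith
end
end

section
/- Let z_1, …, z_n ∈ ℤ_{≥0}^m be pairwise distinct (n ≥ 1), let x* ∈ ℝ_{>0}^m, let I ⊆ {1, …, m} be nonempty, and let M_I denote the set of permutations μ of {1, …, n} such that cl(S_μ) ∩ L_I ≠ ∅. Then for every compact subset K of L_I there exists a relatively open neighbourhood U of K in ℝ_{≥0}^m such that U ⊆ ∪_{μ ∈ M_I} cl(S_μ). -/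
open Filter Topology

noncomputable section

/-- Base-`B` digit expansions are injective. -/
lemma digits_inj : ∀ (m B : ℕ) (a b : Fin m → ℕ),
    (∀ l, a l < B) → (∀ l, b l < B) →
    (∑ l, a l * B ^ (l : ℕ)) = (∑ l, b l * B ^ (l : ℕ)) → a = b := by
  intro m
  induction m with
  | zero => intro B a b _ _ _; funext l; exact l.elim0
  | succ m ih =>
    intro B a b ha hb hsum
    have h0 : ∀ c : Fin (m + 1) → ℕ, (∑ l, c l * B ^ (l : ℕ))
        = c 0 + B * ∑ l : Fin m, c l.succ * B ^ (l : ℕ) := by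
      intro c
      rw [Fin.sum_univ_succ]
      have : ∀ l : Fin m, c l.succ * B ^ ((l.succ : Fin (m + 1)) : ℕ)
          = B * (c l.succ * B ^ (l : ℕ)) := by
        intro l; rw [Fin.val_succ, pow_succ]; ring
      rw [Finset.sum_congr rfl (fun l _ => this l), ← Finset.mul_sum]
      simp
    rw [h0 a, h0 b] at hsum
    have hzero : a 0 = b 0 := by
      have := congrArg (· % B) hsum
      simpa [Nat.add_mul_mod_self_left, Nat.mod_eq_of_lt (ha 0),
        Nat.mod_eq_of_lt (hb 0)] using this
    have hB : 0 < B := lt_of_le_of_lt (Nat.zero_le _) (ha 0)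
    have hsum' : (∑ l : Fin m, a l.succ * B ^ (l : ℕ))
        = ∑ l : Fin m, b l.succ * B ^ (l : ℕ) := by
      rw [hzero] at hsum
      exact Nat.eq_of_mul_eq_mul_left hB (Nat.add_left_cancel hsum)
    have htail := ih B (fun l => a l.succ) (fun l => b l.succ)
      (fun l => ha l.succ) (fun l => hb l.succ) hsum'
    funext l
    refine Fin.cases hzero (fun i => ?_) l
    exact congrFun htail i

lemma ratio_pos {m : ℕ} {xstar x : Fin m → ℝ} (hxs : ∀ l, 0 < xstar l)
    (hx : ∀ l, 0 < x l) (zv : Fin m → ℕ) : 0 < ratio xstar x zv :=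
  Finset.prod_pos fun l _ => pow_pos (div_pos (hx l) (hxs l)) _

lemma ratio_scale {m : ℕ} (xstar x : Fin m → ℝ) (zv : Fin m → ℕ) (t : ℝ)
    (w : Fin m → ℝ) :
    ratio xstar (fun l => x l * Real.exp (t * w l)) zv
      = ratio xstar x zv * Real.exp (t * ∑ l, (zv l : ℝ) * w l) := by
  unfold ratio
  have key : ∀ l : Fin m, (x l * Real.exp (t * w l) / xstar l) ^ zv l
      = (x l / xstar l) ^ zv l * Real.exp ((zv l : ℝ) * (t * w l)) := by
    intro l
    rw [mul_div_right_comm, mul_pow, Real.exp_nat_mul]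
  rw [Finset.prod_congr rfl (fun l _ => key l), Finset.prod_mul_distrib,
    ← Real.exp_sum]
  have hsum : (∑ l, (zv l : ℝ) * (t * w l)) = t * ∑ l, (zv l : ℝ) * w l := by
    rw [Finset.mul_sum]
    exact Finset.sum_congr rfl fun l _ => by ring
  rw [hsum]

/-- Any injective tuple of reals can be sorted strictly decreasingly. -/
lemma exists_sorting_perm {n : ℕ} (f : Fin n → ℝ) (hf : Function.Injective f) :
    ∃ μ : Equiv.Perm (Fin n), ∀ i : Fin (n - 1), f (μ (emb i)) > f (μ (embS i)) := by
  have hg : Function.Injective (fun i => -f i) := fun i j h => hf (neg_injective h)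
  set σ := Tuple.sort (fun i => -f i) with hσ
  have hmono : Monotone ((fun i => -f i) ∘ σ) := Tuple.monotone_sort _
  have hs : StrictMono ((fun i => -f i) ∘ σ) :=
    hmono.strictMono_of_injective (hg.comp σ.injective)
  refine ⟨σ, fun i => ?_⟩
  have hlt : (emb i : Fin n) < embS i := by
    simp only [emb, embS, Fin.mk_lt_mk]; omega
  have := hs hlt
  simp only [Function.comp_apply, neg_lt_neg_iff] at this
  exact this

/-- Every positive point is in the closure of the union of all strata. -/
lemma pos_mem_closure_union {m n : ℕ} (z : Fin n → Fin m → ℕ)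
    (hz : Function.Injective z) (xstar : Fin m → ℝ) (hxs : ∀ l, 0 < xstar l)
    (x : Fin m → ℝ) (hx : ∀ l, 0 < x l) :
    x ∈ closure (⋃ μ : Equiv.Perm (Fin n), stratum z xstar μ) := by
  classical
  set B : ℕ := (Finset.univ.sup fun p : Fin n × Fin m => z p.1 p.2) + 1 with hB
  have hzB : ∀ i l, z i l < B := by
    intro i l
    have : z i l ≤ Finset.univ.sup fun p : Fin n × Fin m => z p.1 p.2 :=
      Finset.le_sup (f := fun p : Fin n × Fin m => z p.1 p.2) (Finset.mem_univ (i, l))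
    omega
  set w : Fin m → ℝ := fun l => (B : ℝ) ^ (l : ℕ) with hw
  set c : Fin n → ℝ := fun i => ∑ l, (z i l : ℝ) * w l with hc
  have hcinj : Function.Injective c := by
    intro i j hij
    apply hz
    have hcast : ∀ i : Fin n, c i = ((∑ l, z i l * B ^ (l : ℕ) : ℕ) : ℝ) := by
      intro i; simp only [hc, hw]; push_cast; rfl
    rw [hcast, hcast] at hij
    exact digits_inj m B (z i) (z j) (hzB i) (hzB j) (Nat.cast_injective hij)
  set rx : Fin n → ℝ := fun i => ratio xstar x (z i) with hrx
  have hrxpos : ∀ i, 0 < rx i := fun i => ratio_pos hxs hx (z i)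
  set Bad : Set ℝ := ⋃ p : Fin n × Fin n,
    (if p.1 = p.2 then (∅ : Set ℝ)
      else {Real.log (rx p.2 / rx p.1) / (c p.1 - c p.2)}) with hBad
  have hBadFin : Bad.Finite := by
    apply Set.finite_iUnion
    intro p
    split <;> simp [Set.finite_singleton]
  have key : ∀ t : ℝ, t ∉ Bad →
      Function.Injective fun i => rx i * Real.exp (t * c i) := by
    intro t ht i j h
    by_contra hij
    apply ht
    refine Set.mem_iUnion.2 ⟨(i, j), ?_⟩
    rw [if_neg hij]
    have hcij : c i ≠ c j := fun e => hij (hcinj e)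
    simp only at h
    have h1 : Real.exp (t * c i - t * c j) = rx j / rx i := by
      rw [Real.exp_sub, div_eq_div_iff (Real.exp_pos _).ne' (hrxpos i).ne']
      linarith [h]
    have h2 : t * c i - t * c j = Real.log (rx j / rx i) := by
      rw [← h1, Real.log_exp]
    rw [Set.mem_singleton_iff, eq_div_iff (sub_ne_zero.2 hcij)]
    linear_combination h2
  have hex : ∀ k : ℕ, ∃ t : ℝ, t ∈ Set.Ioo (0 : ℝ) (1 / ((k : ℝ) + 1)) ∧ t ∉ Bad := by
    intro k
    have hlt : (0 : ℝ) < 1 / ((k : ℝ) + 1) := by positivity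
    have hne : (Set.Ioo (0 : ℝ) (1 / ((k : ℝ) + 1)) \ Bad).Nonempty :=
      ((Set.Ioo_infinite hlt).diff hBadFin).nonempty
    obtain ⟨t, ht⟩ := hne
    exact ⟨t, ht.1, ht.2⟩
  choose t ht1 ht2 using hex
  set y : ℕ → Fin m → ℝ := fun k l => x l * Real.exp (t k * w l) with hy
  have hmem : ∀ k, y k ∈ ⋃ μ : Equiv.Perm (Fin n), stratum z xstar μ := by
    intro k
    have hypos : ∀ l, 0 < y k l := fun l => mul_pos (hx l) (Real.exp_pos _)
    have hfe : (fun i => ratio xstar (y k) (z i))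
        = fun i => rx i * Real.exp (t k * c i) := by
      funext i
      exact ratio_scale xstar x (z i) (t k) w
    have hfi : Function.Injective fun i => ratio xstar (y k) (z i) := by
      rw [hfe]; exact key (t k) (ht2 k)
    obtain ⟨μ, hμ⟩ := exists_sorting_perm _ hfi
    exact Set.mem_iUnion.2 ⟨μ, hypos, hμ⟩
  have htt : Filter.Tendsto t Filter.atTop (𝓝 0) := by
    apply squeeze_zero (fun k => (ht1 k).1.le) (fun k => (ht1 k).2.le)
    exact tendsto_one_div_add_atTop_nhds_zero_nat
  have hyt : Filter.Tendsto y Filter.atTop (𝓝 x) := by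
    rw [tendsto_pi_nhds]
    intro l
    have hcont : Continuous fun s : ℝ => x l * Real.exp (s * w l) :=
      continuous_const.mul (Real.continuous_exp.comp (continuous_id.mul continuous_const))
    have := (hcont.tendsto 0).comp htt
    simp at this; exact this
  exact mem_closure_of_tendsto hyt (Filter.Eventually.of_forall hmem)

/-- Every nonnegative point is in the closure of some stratum. -/
lemma nonneg_mem_closure {m n : ℕ} (z : Fin n → Fin m → ℕ)
    (hz : Function.Injective z) (xstar : Fin m → ℝ) (hxs : ∀ l, 0 < xstar l)
    (x : Fin m → ℝ) (hx : ∀ l, 0 ≤ x l) :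
    ∃ μ : Equiv.Perm (Fin n), x ∈ closure (stratum z xstar μ) := by
  classical
  set T : Set (Fin m → ℝ) := ⋃ μ : Equiv.Perm (Fin n), stratum z xstar μ with hT
  have hxT : x ∈ closure T := by
    set y : ℕ → Fin m → ℝ := fun k l => x l + 1 / ((k : ℝ) + 1) with hy
    have hmem : ∀ k, y k ∈ closure T := by
      intro k
      apply pos_mem_closure_union z hz xstar hxs
      intro l
      have : (0 : ℝ) < 1 / ((k : ℝ) + 1) := by positivity
      have := hx l
      simp only [hy]
      linarith
    have hyt : Filter.Tendsto y Filter.atTop (𝓝 x) := by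
      rw [tendsto_pi_nhds]
      intro l
      have : Filter.Tendsto (fun k : ℕ => x l + 1 / ((k : ℝ) + 1))
          Filter.atTop (𝓝 (x l + 0)) :=
        tendsto_const_nhds.add tendsto_one_div_add_atTop_nhds_zero_nat
      simpa [hy] using this
    have := mem_closure_of_tendsto hyt (Filter.Eventually.of_forall hmem)
    rwa [closure_closure] at this
  have hsub : closure T ⊆ ⋃ μ : Equiv.Perm (Fin n), closure (stratum z xstar μ) := by
    apply closure_minimal (Set.iUnion_mono fun μ => subset_closure)
    exact isClosed_iUnion_of_finite fun μ => isClosed_closure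
  exact Set.mem_iUnion.1 (hsub hxT)

/-- every compact subset `K` of `L_I` has a relatively open neighbourhood
`U` in `ℝ_{≥0}^m` contained in the union of the closures of the strata whose closure
meets `L_I`. -/
theorem stmt10 {m n : ℕ} (hn : 1 ≤ n) (z : Fin n → Fin m → ℕ) (hz : Function.Injective z)
    (xstar : Fin m → ℝ) (hxs : ∀ l, 0 < xstar l)
    (I : Finset (Fin m)) (hI : I.Nonempty) :
    ∀ K : Set (Fin m → ℝ), K ⊆ LI I → IsCompact K →
      ∃ V : Set (Fin m → ℝ), IsOpen V ∧ K ⊆ V ∧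
        ∀ x ∈ V, (∀ l, 0 ≤ x l) →
          ∃ μ : Equiv.Perm (Fin n), (closure (stratum z xstar μ) ∩ LI I).Nonempty ∧
            x ∈ closure (stratum z xstar μ) := by
  classical
  intro K hK _hKc
  set D : Set (Fin m → ℝ) :=
    ⋃ μ ∈ {μ : Equiv.Perm (Fin n) |
        ¬(closure (stratum z xstar μ) ∩ LI I).Nonempty},
      closure (stratum z xstar μ) with hD
  have hDclosed : IsClosed D :=
    Set.Finite.isClosed_biUnion (Set.toFinite _) fun μ _ => isClosed_closure
  refine ⟨Dᶜ, hDclosed.isOpen_compl, ?_, ?_⟩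
  · intro x hx
    simp only [Set.mem_compl_iff, hD, Set.mem_iUnion]
    rintro ⟨μ, hμ, hxc⟩
    exact hμ ⟨x, hxc, hK hx⟩
  · intro x hxV hx0
    obtain ⟨μ, hμ⟩ := nonneg_mem_closure z hz xstar hxs x hx0
    refine ⟨μ, ?_, hμ⟩
    by_contra hne
    exact hxV (Set.mem_biUnion hne hμ)
end
end

section
/- Consider the mass-action system on m = 3 species with n = 4 complexes z_1 = (1,0,0), z_2 = (0,1,0), z_3 = (1,1,0), z_4 = (1,0,1) and reactions C_1 ⇌ C_2, C_2 ⇌ C_3, C_3 ⇌ C_4 with arbitrary strictly positive rate constants k(1,2), k(2,1), k(2,3), k(3,2), k(3,4), k(4,3) (all other k(i,j) = 0). If x* ∈ ℝ_{>0}^3 is a complex balanced equilibrium of this system, then every solution x : [0, ∞) → ℝ_{>0}^3 of x' = f(x) with x(0) ∈ ℝ_{>0}^3 converges to x* as t → ∞. -/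
open Filter Topology

noncomputable section

/-- The complexes of Example 1: `C_1 = A_1`, `C_2 = A_2`, `C_3 = A_1 + A_2`,
`C_4 = A_1 + A_3`. -/
def zEx : Fin 4 → Fin 3 → ℕ := ![![1, 0, 0], ![0, 1, 0], ![1, 1, 0], ![1, 0, 1]]

open Real Set

set_option maxHeartbeats 1000000

namespace Stmt14Aux

lemma log_pair_nonneg {s t : ℝ} (hs : 0 < s) (ht : 0 < t) :
    0 ≤ (s - t) * (Real.log s - Real.log t) := by
  rcases le_total t s with h | h
  · exact mul_nonneg (by linarith) (by simpa using sub_nonneg.2 (Real.log_le_log ht h))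
  · have := Real.log_le_log hs h
    nlinarith

lemma log_pair_pos {s t : ℝ} (hs : 0 < s) (ht : 0 < t) (hne : s ≠ t) :
    0 < (s - t) * (Real.log s - Real.log t) := by
  rcases lt_or_gt_of_ne hne with h | h
  · have := Real.log_lt_log hs h
    exact mul_pos_of_neg_of_neg (by linarith) (by linarith)
  · have := Real.log_lt_log ht h
    exact mul_pos (by linarith) (by linarith)

/-- per-species contribution to the Lyapunov function. -/
def phi (s t : ℝ) : ℝ := s * (Real.log s - Real.log t) - s + t

lemma phi_nonneg {s t : ℝ} (hs : 0 < s) (ht : 0 < t) : 0 ≤ phi s t := by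
  have h := Real.log_le_sub_one_of_pos (div_pos ht hs)
  rw [Real.log_div ht.ne' hs.ne'] at h
  have := mul_le_mul_of_nonneg_left h hs.le
  rw [mul_sub] at this
  have h2 : s * (t / s) = t := by field_simp
  unfold phi; nlinarith

lemma phi_pos {s t : ℝ} (hs : 0 < s) (ht : 0 < t) (hne : s ≠ t) : 0 < phi s t := by
  have hd : t / s ≠ 1 := by
    intro h; apply hne; field_simp at h; linarith
  have h := Real.log_lt_sub_one_of_pos (div_pos ht hs) hd
  rw [Real.log_div ht.ne' hs.ne'] at h
  have := (mul_lt_mul_iff_right₀ hs).2 h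
  rw [mul_sub] at this
  have h2 : s * (t / s) = t := by field_simp
  unfold phi; nlinarith

lemma phi_self (t : ℝ) : phi t t = by exact 0 := by unfold phi; ring

lemma phi_upper {s t V0 : ℝ} (hs : 0 < s) (ht : 0 < t) (h : phi s t ≤ V0) :
    s ≤ max (Real.exp 2 * t) V0 := by
  by_contra hc
  push_neg at hc
  rw [max_lt_iff] at hc
  obtain ⟨h1, h2⟩ := hc
  have hlog : (2:ℝ) ≤ Real.log s - Real.log t := by
    have h3 := Real.log_le_log (by positivity) h1.le
    rw [Real.log_mul (Real.exp_pos 2).ne' ht.ne', Real.log_exp] at h3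
    linarith
  unfold phi at h; nlinarith

/-- Barrier lemma. -/
lemma barrier (h h' : ℝ → ℝ) (hd : ∀ t ≥ (0:ℝ), HasDerivAt h (h' t) t)
    (L : ℝ) (hpos : ∀ t ≥ (0:ℝ), h t < min (h 0) L → 0 ≤ h' t) :
    ∀ t ≥ (0:ℝ), min (h 0) L ≤ h t := by
  intro t1 ht1
  by_contra hc
  push_neg at hc
  set c := min (h 0) L with hcdef
  have h0c : c ≤ h 0 := min_le_left _ _
  have ht1pos : 0 < t1 := by
    rcases eq_or_lt_of_le ht1 with rfl | h; · linarith
    · exact h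
  set S := {t | t ∈ Icc (0:ℝ) t1 ∧ c ≤ h t} with hS
  have hcont : ContinuousOn h (Icc 0 t1) := fun t ht =>
    ((hd t ht.1).continuousAt).continuousWithinAt
  have hSclosed : IsClosed S := by
    have : S = Icc 0 t1 ∩ h ⁻¹' Ici c := by
      ext u
      simp only [hS, Set.mem_setOf_eq, Set.mem_inter_iff, Set.mem_preimage, Set.mem_Ici]
    rw [this]
    exact ContinuousOn.preimage_isClosed_of_isClosed hcont isClosed_Icc isClosed_Ici
  have hSne : S.Nonempty := ⟨0, ⟨le_refl _, ht1pos.le⟩, h0c⟩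
  have hSbdd : BddAbove S := by
    rw [bddAbove_def]
    exact ⟨t1, fun u hu => hu.1.2⟩
  set t0 := sSup S with ht0def
  have ht0S : t0 ∈ S := hSclosed.csSup_mem hSne hSbdd
  have ht0le : t0 ≤ t1 := ht0S.1.2
  have ht0pos : 0 ≤ t0 := ht0S.1.1
  have hct0 : c ≤ h t0 := ht0S.2
  have ht0lt : t0 < t1 := lt_of_le_of_ne ht0le (fun he => by rw [he] at hct0; linarith)
  have hlt : ∀ t ∈ Ioc t0 t1, h t < c := by
    intro t ht
    by_contra hge
    push_neg at hge
    have : t ∈ S := ⟨⟨le_trans ht0pos ht.1.le, ht.2⟩, hge⟩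
    have := le_csSup hSbdd this
    linarith [ht.1]
  have hmono : MonotoneOn h (Icc t0 t1) := by
    apply monotoneOn_of_deriv_nonneg (convex_Icc t0 t1)
      (hcont.mono (Icc_subset_Icc ht0pos le_rfl))
    · intro t ht
      rw [interior_Icc] at ht
      exact ((hd t (le_trans ht0pos ht.1.le)).differentiableAt).differentiableWithinAt
    · intro t ht
      rw [interior_Icc] at ht
      have hhd := hd t (le_trans ht0pos ht.1.le)
      rw [hhd.deriv]
      exact hpos t (le_trans ht0pos ht.1.le) (hlt t ⟨ht.1, ht.2.le⟩)
  have := hmono ⟨le_rfl, ht0le⟩ ⟨ht0le, le_rfl⟩ ht0le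
  linarith

/-- Decay lemma. -/
lemma decay (h h' : ℝ → ℝ) (hd : ∀ t ≥ (0:ℝ), HasDerivAt h (h' t) t)
    (hle : ∀ t ≥ (0:ℝ), h' t ≤ 0) :
    ∀ s t : ℝ, 0 ≤ s → s ≤ t → h t ≤ h s := by
  intro s t hs hst
  have hcont : ContinuousOn h (Icc s t) := fun u hu =>
    ((hd u (le_trans hs hu.1)).continuousAt).continuousWithinAt
  have hmono : AntitoneOn h (Icc s t) := by
    apply antitoneOn_of_deriv_nonpos (convex_Icc s t) hcont
    · intro u hu
      rw [interior_Icc] at hu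
      exact ((hd u (le_trans hs hu.1.le)).differentiableAt).differentiableWithinAt
    · intro u hu
      rw [interior_Icc] at hu
      rw [(hd u (le_trans hs hu.1.le)).deriv]
      exact hle u (le_trans hs hu.1.le)
  exact hmono ⟨le_rfl, hst⟩ ⟨hst, le_rfl⟩ hst

lemma key_identity (k01 k10 k12 k21 k23 k32 A B C y0 y1 y2 : ℝ)
    (hA : 0 < A) (hB : 0 < B) (hC : 0 < C)
    (hy0 : 0 < y0) (hy1 : 0 < y1) (hy2 : 0 < y2)
    (db1 : k10 * B = k01 * A) (db2 : k12 = k21 * A) (db3 : k23 * B = k32 * C) :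
    (-k01 * y0 + (k10 + k12) * y1 - k21 * y0 * y1) * (Real.log y0 - Real.log A)
    + (k01 * y0 - k10 * y1 - k23 * (y0 * y1) + k32 * (y0 * y2)) * (Real.log y1 - Real.log B)
    + (k23 * (y0 * y1) - k32 * (y0 * y2)) * (Real.log y2 - Real.log C)
    = -(k01 * A * ((y0 / A - y1 / B) * (Real.log (y0 / A) - Real.log (y1 / B)))
      + k21 * A * y1 * ((y0 / A - 1) * Real.log (y0 / A))
      + k23 * B * y0 * ((y1 / B - y2 / C) * (Real.log (y1 / B) - Real.log (y2 / C)))) := by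
  rw [Real.log_div hy0.ne' hA.ne', Real.log_div hy1.ne' hB.ne', Real.log_div hy2.ne' hC.ne']
  have e10 : k10 = k01 * A / B := by field_simp; linarith
  have e32 : k32 = k23 * B / C := by field_simp; linarith
  subst db2 e10 e32
  field_simp
  ring

/-- Lyapunov function. -/
def Vfun (xs y : Fin 3 → ℝ) : ℝ := phi (y 0) (xs 0) + phi (y 1) (xs 1) + phi (y 2) (xs 2)

lemma Vfun_cont (xs : Fin 3 → ℝ) : Continuous (Vfun xs) := by
  have h : ∀ l : Fin 3, Continuous (fun y : Fin 3 → ℝ => phi (y l) (xs l)) := by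
    intro l
    have : (fun y : Fin 3 → ℝ => phi (y l) (xs l))
        = fun y => (y l * Real.log (y l)) - Real.log (xs l) * y l - y l + xs l := by
      funext y; unfold phi; ring
    rw [this]
    exact (((Real.continuous_mul_log.comp (continuous_apply l)).sub
      (continuous_const.mul (continuous_apply l))).sub (continuous_apply l)).add
      continuous_const
  exact ((h 0).add (h 1)).add (h 2)

lemma Vfun_nonneg {xs y : Fin 3 → ℝ} (hxs : ∀ l, 0 < xs l) (hy : ∀ l, 0 < y l) :
    0 ≤ Vfun xs y := by
  have h0 := phi_nonneg (hy 0) (hxs 0)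
  have h1 := phi_nonneg (hy 1) (hxs 1)
  have h2 := phi_nonneg (hy 2) (hxs 2)
  unfold Vfun; linarith

lemma Vfun_term_le {xs y : Fin 3 → ℝ} (hxs : ∀ l, 0 < xs l) (hy : ∀ l, 0 < y l)
    (l : Fin 3) : phi (y l) (xs l) ≤ Vfun xs y := by
  have h0 := phi_nonneg (hy 0) (hxs 0)
  have h1 := phi_nonneg (hy 1) (hxs 1)
  have h2 := phi_nonneg (hy 2) (hxs 2)
  fin_cases l <;> (unfold Vfun; simp only [Fin.zero_eta, Fin.mk_one, Fin.reduceFinMk]; linarith)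

lemma Vfun_self (xs : Fin 3 → ℝ) : Vfun xs xs = 0 := by
  unfold Vfun phi; ring

lemma Vfun_pos {xs y : Fin 3 → ℝ} (hxs : ∀ l, 0 < xs l) (hy : ∀ l, 0 < y l)
    (l : Fin 3) (hne : y l ≠ xs l) : 0 < Vfun xs y :=
  lt_of_lt_of_le (phi_pos (hy l) (hxs l) hne) (Vfun_term_le hxs hy l)

/-- dissipation function. -/
def Dfun (κ1 κ2 κ3 : ℝ) (xs y : Fin 3 → ℝ) : ℝ :=
  κ1 * ((y 0 / xs 0 - y 1 / xs 1) * (Real.log (y 0 / xs 0) - Real.log (y 1 / xs 1)))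
  + κ2 * y 1 * ((y 0 / xs 0 - 1) * Real.log (y 0 / xs 0))
  + κ3 * y 0 * ((y 1 / xs 1 - y 2 / xs 2) * (Real.log (y 1 / xs 1) - Real.log (y 2 / xs 2)))

lemma Dfun_nonneg {κ1 κ2 κ3 : ℝ} (h1 : 0 ≤ κ1) (h2 : 0 ≤ κ2) (h3 : 0 ≤ κ3)
    {xs y : Fin 3 → ℝ} (hxs : ∀ l, 0 < xs l) (hy : ∀ l, 0 < y l) :
    0 ≤ Dfun κ1 κ2 κ3 xs y := by
  have hu : 0 < y 0 / xs 0 := div_pos (hy 0) (hxs 0)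
  have hv : 0 < y 1 / xs 1 := div_pos (hy 1) (hxs 1)
  have hw : 0 < y 2 / xs 2 := div_pos (hy 2) (hxs 2)
  have t1 := log_pair_nonneg hu hv
  have t2 := log_pair_nonneg hu one_pos
  rw [Real.log_one, sub_zero] at t2
  have t3 := log_pair_nonneg hv hw
  have := mul_nonneg (mul_nonneg h2 (hy 1).le) t2
  have := mul_nonneg h1 t1
  have := mul_nonneg (mul_nonneg h3 (hy 0).le) t3
  unfold Dfun; linarith

lemma Dfun_pos {κ1 κ2 κ3 : ℝ} (h1 : 0 < κ1) (h2 : 0 < κ2) (h3 : 0 < κ3)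
    {xs y : Fin 3 → ℝ} (hxs : ∀ l, 0 < xs l) (hy : ∀ l, 0 < y l)
    (hne : ¬ (y 0 = xs 0 ∧ y 1 = xs 1 ∧ y 2 = xs 2)) :
    0 < Dfun κ1 κ2 κ3 xs y := by
  have hu : 0 < y 0 / xs 0 := div_pos (hy 0) (hxs 0)
  have hv : 0 < y 1 / xs 1 := div_pos (hy 1) (hxs 1)
  have hw : 0 < y 2 / xs 2 := div_pos (hy 2) (hxs 2)
  have t1 := log_pair_nonneg hu hv
  have t2 := log_pair_nonneg hu one_pos
  rw [Real.log_one, sub_zero] at t2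
  have t3 := log_pair_nonneg hv hw
  have n1 := mul_nonneg h1.le t1
  have n2 := mul_nonneg (mul_nonneg h2.le (hy 1).le) t2
  have n3 := mul_nonneg (mul_nonneg h3.le (hy 0).le) t3
  have hdiv : ∀ l : Fin 3, y l / xs l = 1 ↔ y l = xs l := by
    intro l
    rw [div_eq_one_iff_eq (hxs l).ne']
  by_cases e0 : y 0 = xs 0
  · by_cases e1 : y 1 = xs 1
    · have e2 : y 2 ≠ xs 2 := fun e2 => hne ⟨e0, e1, e2⟩
      have hvw : y 1 / xs 1 ≠ y 2 / xs 2 := by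
        rw [(hdiv 1).2 e1]
        intro h
        exact e2 ((hdiv 2).1 h.symm)
      have p3 := mul_pos (mul_pos h3 (hy 0)) (log_pair_pos hv hw hvw)
      unfold Dfun; linarith
    · have huv : y 0 / xs 0 ≠ y 1 / xs 1 := by
        rw [(hdiv 0).2 e0]
        intro h
        exact e1 ((hdiv 1).1 h.symm)
      have p1 := mul_pos h1 (log_pair_pos hu hv huv)
      unfold Dfun; linarith
  · have hune : y 0 / xs 0 ≠ 1 := fun h => e0 ((hdiv 0).1 h)
    have p2' := log_pair_pos hu one_pos hune
    rw [Real.log_one, sub_zero] at p2'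
    have p2 := mul_pos (mul_pos h2 (hy 1)) p2'
    unfold Dfun; linarith

lemma Dfun_contAt (κ1 κ2 κ3 : ℝ) (xs : Fin 3 → ℝ) (hxs : ∀ l, 0 < xs l)
    (y : Fin 3 → ℝ) (hy : ∀ l, 0 < y l) : ContinuousAt (Dfun κ1 κ2 κ3 xs) y := by
  have hc : ∀ l : Fin 3, ContinuousAt (fun y : Fin 3 → ℝ => y l / xs l) y :=
    fun l => (continuous_apply l).continuousAt.div_const _
  have hl : ∀ l : Fin 3, ContinuousAt (fun y : Fin 3 → ℝ => Real.log (y l / xs l)) y :=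
    fun l => (hc l).log (div_pos (hy l) (hxs l)).ne'
  have ha : ∀ l : Fin 3, ContinuousAt (fun y : Fin 3 → ℝ => y l) y :=
    fun l => (continuous_apply l).continuousAt
  unfold Dfun
  exact ((continuousAt_const.mul (((hc 0).sub (hc 1)).mul ((hl 0).sub (hl 1)))).add
    ((continuousAt_const.mul (ha 1)).mul (((hc 0).sub continuousAt_const).mul (hl 0)))).add
    ((continuousAt_const.mul (ha 0)).mul (((hc 1).sub (hc 2)).mul ((hl 1).sub (hl 2))))

end Stmt14Aux

/-- for the system `A_1 ⇌ A_2 ⇌ A_1 + A_2 ⇌ A_1 + A_3` (reactions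
`C_i ⇌ C_{i+1}`, `i = 1, 2, 3`, with arbitrary positive rate constants), every positive
solution converges to the complex balanced equilibrium `x*`. -/
theorem stmt14 (k : Fin 4 → Fin 4 → ℝ)
    (hkpos : ∀ i j : Fin 4, (i.val + 1 = j.val ∨ j.val + 1 = i.val) → 0 < k i j)
    (hkzero : ∀ i j : Fin 4, ¬(i.val + 1 = j.val ∨ j.val + 1 = i.val) → k i j = 0)
    (xstar : Fin 3 → ℝ) (hxs : ∀ l, 0 < xstar l)
    (hcb : complexBalanced zEx k xstar) :
    ∀ x : ℝ → Fin 3 → ℝ, (∀ l, 0 < x 0 l) →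
      (∀ t : ℝ, 0 ≤ t → ∀ l, 0 < x t l) →
      (∀ t : ℝ, 0 ≤ t → HasDerivAt x (maf zEx k (x t)) t) →
      Tendsto x atTop (𝓝 xstar) := by
  intro x hx0 hxpos hode
  have h00 := hkzero 0 0 (by decide); have h02 := hkzero 0 2 (by decide)
  have h03 := hkzero 0 3 (by decide); have h11 := hkzero 1 1 (by decide)
  have h13 := hkzero 1 3 (by decide); have h20 := hkzero 2 0 (by decide)
  have h22 := hkzero 2 2 (by decide); have h30 := hkzero 3 0 (by decide)
  have h31 := hkzero 3 1 (by decide); have h33 := hkzero 3 3 (by decide)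
  have p01 : 0 < k 0 1 := hkpos 0 1 (by decide)
  have p10 : 0 < k 1 0 := hkpos 1 0 (by decide)
  have p12 : 0 < k 1 2 := hkpos 1 2 (by decide)
  have p21 : 0 < k 2 1 := hkpos 2 1 (by decide)
  have p23 : 0 < k 2 3 := hkpos 2 3 (by decide)
  have p32 : 0 < k 3 2 := hkpos 3 2 (by decide)
  -- explicit vector field
  have hmaf0 : ∀ y : Fin 3 → ℝ, maf zEx k y 0
      = -k 0 1 * y 0 + (k 1 0 + k 1 2) * y 1 - k 2 1 * y 0 * y 1 := by
    intro y
    simp [maf, mono, zEx, Fin.sum_univ_four, Fin.prod_univ_three, h00, h02, h03, h11, h13,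
      h20, h22, h30, h31, h33, Matrix.vecHead, Matrix.vecTail]
    ring
  have hmaf1 : ∀ y : Fin 3 → ℝ, maf zEx k y 1
      = k 0 1 * y 0 - k 1 0 * y 1 - k 2 3 * (y 0 * y 1) + k 3 2 * (y 0 * y 2) := by
    intro y
    simp [maf, mono, zEx, Fin.sum_univ_four, Fin.prod_univ_three, h00, h02, h03, h11, h13,
      h20, h22, h30, h31, h33, Matrix.vecHead, Matrix.vecTail]
    ring
  have hmaf2 : ∀ y : Fin 3 → ℝ, maf zEx k y 2
      = k 2 3 * (y 0 * y 1) - k 3 2 * (y 0 * y 2) := by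
    intro y
    simp [maf, mono, zEx, Fin.sum_univ_four, Fin.prod_univ_three, h00, h02, h03, h11, h13,
      h20, h22, h30, h31, h33, Matrix.vecHead, Matrix.vecTail]
    ring
  -- detailed balance
  have e0 := hcb 0; have e1 := hcb 1; have e3 := hcb 3
  simp [mono, zEx, Fin.sum_univ_four, Fin.prod_univ_three, h00, h02, h03, h11, h13,
    h20, h22, h30, h31, h33, Matrix.vecHead, Matrix.vecTail] at e0 e1 e3
  have hA := hxs 0; have hB := hxs 1; have hC := hxs 2
  have db1 : k 1 0 * xstar 1 = k 0 1 * xstar 0 := by linarith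
  have db2 : k 1 2 = k 2 1 * xstar 0 := by
    have h : k 1 2 * xstar 1 = k 2 1 * xstar 0 * xstar 1 := by nlinarith [e0, e1]
    exact mul_right_cancel₀ hB.ne' h
  have db3 : k 2 3 * xstar 1 = k 3 2 * xstar 2 := by
    have h : xstar 0 * (k 2 3 * xstar 1) = xstar 0 * (k 3 2 * xstar 2) := by nlinarith [e3]
    exact mul_left_cancel₀ hA.ne' h
  -- the dissipation function along the trajectory
  have hκ1 : 0 < k 0 1 * xstar 0 := mul_pos p01 hA
  have hκ2 : 0 < k 2 1 * xstar 0 := mul_pos p21 hA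
  have hκ3 : 0 < k 2 3 * xstar 1 := mul_pos p23 hB
  set Dx : (Fin 3 → ℝ) → ℝ :=
    Stmt14Aux.Dfun (k 0 1 * xstar 0) (k 2 1 * xstar 0) (k 2 3 * xstar 1) xstar with hDxdef
  set V : ℝ → ℝ := fun t => Stmt14Aux.Vfun xstar (x t) with hVdef
  have hcoord : ∀ t, 0 ≤ t → ∀ l, HasDerivAt (fun s => x s l) (maf zEx k (x t) l) t :=
    fun t ht l => (hasDerivAt_pi.1 (hode t ht)) l
  -- derivative of V along trajectory
  have hVd : ∀ t ≥ (0:ℝ), HasDerivAt V (-(Dx (x t))) t := by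
    intro t ht
    have hp := hxpos t ht
    have hterm : ∀ l, HasDerivAt (fun s => Stmt14Aux.phi (x s l) (xstar l))
        (maf zEx k (x t) l * (Real.log (x t l) - Real.log (xstar l))
          + x t l * ((x t l)⁻¹ * maf zEx k (x t) l) - maf zEx k (x t) l) t := by
      intro l
      have hc := hcoord t ht l
      have hlog : HasDerivAt (fun s => Real.log (x s l)) ((x t l)⁻¹ * maf zEx k (x t) l) t :=
        by have := (Real.hasDerivAt_log (hp l).ne').comp t hc; exact this
      have := ((hc.mul (hlog.sub_const (Real.log (xstar l)))).sub hc).add_const (xstar l)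
      simpa [Stmt14Aux.phi] using this
    have hsum := ((hterm 0).add (hterm 1)).add (hterm 2)
    have hfun : (fun s => ((Stmt14Aux.phi (x s 0) (xstar 0) + Stmt14Aux.phi (x s 1) (xstar 1))
        + Stmt14Aux.phi (x s 2) (xstar 2))) = V := by
      funext s; rw [hVdef]; rfl
    rw [show ((fun s => Stmt14Aux.phi (x s 0) (xstar 0)) + (fun s => Stmt14Aux.phi (x s 1) (xstar 1))) + (fun s => Stmt14Aux.phi (x s 2) (xstar 2)) = V from hfun] at hsum
    refine hsum.congr_deriv (Eq.symm ?_)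
    have key := Stmt14Aux.key_identity (k 0 1) (k 1 0) (k 1 2) (k 2 1) (k 2 3) (k 3 2)
      (xstar 0) (xstar 1) (xstar 2) (x t 0) (x t 1) (x t 2) hA hB hC (hp 0) (hp 1) (hp 2)
      db1 db2 db3
    have i0 : x t 0 * ((x t 0)⁻¹ * maf zEx k (x t) 0) = maf zEx k (x t) 0 := by
      rw [← mul_assoc, mul_inv_cancel₀ (hp 0).ne', one_mul]
    have i1 : x t 1 * ((x t 1)⁻¹ * maf zEx k (x t) 1) = maf zEx k (x t) 1 := by
      rw [← mul_assoc, mul_inv_cancel₀ (hp 1).ne', one_mul]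
    have i2 : x t 2 * ((x t 2)⁻¹ * maf zEx k (x t) 2) = maf zEx k (x t) 2 := by
      rw [← mul_assoc, mul_inv_cancel₀ (hp 2).ne', one_mul]
    rw [i0, i1, i2, hmaf0, hmaf1, hmaf2, hDxdef]
    unfold Stmt14Aux.Dfun
    linear_combination -key
  have hDnonneg : ∀ t ≥ (0:ℝ), 0 ≤ Dx (x t) := fun t ht =>
    Stmt14Aux.Dfun_nonneg hκ1.le hκ2.le hκ3.le hxs (hxpos t ht)
  have hVdec : ∀ s t : ℝ, 0 ≤ s → s ≤ t → V t ≤ V s :=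
    Stmt14Aux.decay V (fun t => -(Dx (x t))) hVd (fun t ht => neg_nonpos.2 (hDnonneg t ht))
  have hVle : ∀ t ≥ (0:ℝ), V t ≤ V 0 := fun t ht => hVdec 0 t le_rfl ht
  have hV0nonneg : 0 ≤ V 0 := Stmt14Aux.Vfun_nonneg hxs hx0
  -- upper bounds
  set M : Fin 3 → ℝ := fun l => max (Real.exp 2 * xstar l) (V 0) with hM
  have hub : ∀ t ≥ (0:ℝ), ∀ l, x t l ≤ M l := by
    intro t ht l
    exact Stmt14Aux.phi_upper (hxpos t ht l) (hxs l)
      (le_trans (Stmt14Aux.Vfun_term_le hxs (hxpos t ht) l) (hVle t ht))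
  have hMpos : ∀ l, 0 < M l := fun l => lt_of_lt_of_le (hx0 l) (hub 0 le_rfl l)
  -- persistence: lower bound on x0 + x1
  have hε0pos : 0 < k 1 2 / (2*(k 2 1 + k 2 3)) := div_pos p12 (by linarith)
  have hW : ∀ t ≥ (0:ℝ), min (x 0 0 + x 0 1) (k 1 2 / (2*(k 2 1 + k 2 3))) ≤ x t 0 + x t 1 := by
    apply Stmt14Aux.barrier (fun s => x s 0 + x s 1)
      (fun t => maf zEx k (x t) 0 + maf zEx k (x t) 1)
      (fun t ht => (hcoord t ht 0).add (hcoord t ht 1))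
    intro t ht hlt
    have hp := hxpos t ht
    have hx0lt : x t 0 < k 1 2 / (2*(k 2 1 + k 2 3)) := by
      have h1 := min_le_right (x 0 0 + x 0 1) (k 1 2 / (2*(k 2 1 + k 2 3)))
      have h2 := hp 1
      linarith
    have h3 : (k 2 1 + k 2 3) * x t 0 ≤ k 1 2 / 2 := by
      rw [lt_div_iff₀ (by linarith : (0:ℝ) < 2*(k 2 1 + k 2 3))] at hx0lt
      have hr : (k 2 1 + k 2 3) * x t 0 = x t 0 * (2*(k 2 1 + k 2 3))/2 := by ring
      rw [hr]; linarith
    rw [hmaf0, hmaf1]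
    have hgoal : -k 0 1 * x t 0 + (k 1 0 + k 1 2) * x t 1 - k 2 1 * x t 0 * x t 1
        + (k 0 1 * x t 0 - k 1 0 * x t 1 - k 2 3 * (x t 0 * x t 1) + k 3 2 * (x t 0 * x t 2))
        = (k 1 2 - (k 2 1 + k 2 3) * x t 0) * x t 1 + k 3 2 * (x t 0 * x t 2) := by ring
    rw [hgoal]
    exact add_nonneg (mul_nonneg (by linarith) (hp 1).le)
      (mul_nonneg p32.le (mul_nonneg (hp 0).le (hp 2).le))
  set δ1 := min (x 0 0 + x 0 1) (k 1 2 / (2*(k 2 1 + k 2 3))) with hδ1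
  have hδ1pos : 0 < δ1 := lt_min (by have := hx0 0; have := hx0 1; linarith) hε0pos
  -- lower bound on x1
  have hc2pos : 0 < k 1 0 + k 2 3 * M 0 :=
    add_pos_of_pos_of_nonneg p10 (mul_nonneg p23.le (hMpos 0).le)
  set L2 := min (δ1/2) (k 0 1 * δ1/(4*(k 1 0 + k 2 3 * M 0))) with hL2
  have hL2pos : 0 < L2 := lt_min (by linarith) (by positivity)
  have hbbar : ∀ t ≥ (0:ℝ), min (x 0 1) L2 ≤ x t 1 := by
    apply Stmt14Aux.barrier (fun s => x s 1) (fun t => maf zEx k (x t) 1)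
      (fun t ht => hcoord t ht 1)
    intro t ht hlt
    have hp := hxpos t ht
    have h1 : x t 1 < L2 := lt_of_lt_of_le hlt (min_le_right _ _)
    have h2 : x t 1 ≤ δ1/2 := le_trans h1.le (min_le_left _ _)
    have h3 : δ1/2 ≤ x t 0 := by
      have := hW t ht
      rw [hδ1] at this
      linarith
    have h4 : x t 0 ≤ M 0 := hub t ht 0
    have h5 : L2 ≤ k 0 1 * δ1/(4*(k 1 0 + k 2 3 * M 0)) := min_le_right _ _
    have h6 : (k 1 0 + k 2 3 * M 0) * L2 ≤ k 0 1 * δ1/4 := by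
      calc (k 1 0 + k 2 3 * M 0) * L2
          ≤ (k 1 0 + k 2 3 * M 0) * (k 0 1 * δ1/(4*(k 1 0 + k 2 3 * M 0))) :=
            mul_le_mul_of_nonneg_left h5 hc2pos.le
        _ = k 0 1 * δ1/4 := by field_simp
    rw [hmaf1]
    have a1 : k 2 3 * (x t 0 * x t 1) ≤ k 2 3 * (M 0 * L2) :=
      mul_le_mul_of_nonneg_left (mul_le_mul h4 h1.le (hp 1).le (hMpos 0).le) p23.le
    have a2 : k 1 0 * x t 1 ≤ k 1 0 * L2 := mul_le_mul_of_nonneg_left h1.le p10.le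
    have a3 : k 0 1 * (δ1/2) ≤ k 0 1 * x t 0 := mul_le_mul_of_nonneg_left h3 p01.le
    have a4 : 0 ≤ k 3 2 * (x t 0 * x t 2) :=
      mul_nonneg p32.le (mul_nonneg (hp 0).le (hp 2).le)
    have a5 : k 1 0 * L2 + k 2 3 * (M 0 * L2) ≤ k 0 1 * δ1 / 4 := by
      have hr : k 1 0 * L2 + k 2 3 * (M 0 * L2) = (k 1 0 + k 2 3 * M 0) * L2 := by ring
      rw [hr]; exact h6
    have a6 : 0 ≤ k 0 1 * δ1 := mul_nonneg p01.le hδ1pos.le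
    linarith [a1, a2, a3, a4, a5, a6]
  set δ2 := min (x 0 1) L2 with hδ2
  have hδ2pos : 0 < δ2 := lt_min (hx0 1) hL2pos
  -- lower bound on x2
  set L3 := k 2 3 * δ2 / k 3 2 with hL3
  have hL3pos : 0 < L3 := by positivity
  have hcbar : ∀ t ≥ (0:ℝ), min (x 0 2) L3 ≤ x t 2 := by
    apply Stmt14Aux.barrier (fun s => x s 2) (fun t => maf zEx k (x t) 2)
      (fun t ht => hcoord t ht 2)
    intro t ht hlt
    have hp := hxpos t ht
    have h1 : x t 2 < L3 := lt_of_lt_of_le hlt (min_le_right _ _)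
    have h2 : k 3 2 * x t 2 < k 2 3 * δ2 := by
      rw [hL3, lt_div_iff₀ p32] at h1
      linarith [h1]
    have h3 : δ2 ≤ x t 1 := by
      have := hbbar t ht
      rw [hδ2] at this
      linarith
    have q : 0 ≤ k 2 3 * x t 1 - k 3 2 * x t 2 := by
      have := mul_le_mul_of_nonneg_left h3 p23.le
      linarith [h2]
    have hg : k 2 3 * (x t 0 * x t 1) - k 3 2 * (x t 0 * x t 2)
        = x t 0 * (k 2 3 * x t 1 - k 3 2 * x t 2) := by ring
    rw [hmaf2, hg]
    exact mul_nonneg (hp 0).le q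
  set δ3 := min (x 0 2) L3 with hδ3
  have hδ3pos : 0 < δ3 := lt_min (hx0 2) hL3pos
  -- lower bound on x0
  have hc4pos : 0 < k 0 1 + k 2 1 * M 1 :=
    add_pos_of_pos_of_nonneg p01 (mul_nonneg p21.le (hMpos 1).le)
  set L4 := k 1 0 * δ2 / (k 0 1 + k 2 1 * M 1) with hL4
  have hL4pos : 0 < L4 := by positivity
  have habar : ∀ t ≥ (0:ℝ), min (x 0 0) L4 ≤ x t 0 := by
    apply Stmt14Aux.barrier (fun s => x s 0) (fun t => maf zEx k (x t) 0)
      (fun t ht => hcoord t ht 0)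
    intro t ht hlt
    have hp := hxpos t ht
    have h1 : x t 0 < L4 := lt_of_lt_of_le hlt (min_le_right _ _)
    have h2 : (k 0 1 + k 2 1 * M 1) * x t 0 ≤ k 1 0 * δ2 := by
      rw [hL4, lt_div_iff₀ hc4pos] at h1
      linarith
    have h3 : δ2 ≤ x t 1 := by
      have := hbbar t ht
      rw [hδ2] at this
      linarith
    have h4 : x t 1 ≤ M 1 := hub t ht 1
    rw [hmaf0]
    have a1 : k 2 1 * (x t 0 * x t 1) ≤ k 2 1 * (x t 0 * M 1) :=
      mul_le_mul_of_nonneg_left (mul_le_mul_of_nonneg_left h4 (hp 0).le) p21.le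
    have a2 : k 1 0 * δ2 ≤ k 1 0 * x t 1 := mul_le_mul_of_nonneg_left h3 p10.le
    have a3 : 0 ≤ k 1 2 * x t 1 := mul_nonneg p12.le (hp 1).le
    have a4 : k 0 1 * x t 0 + k 2 1 * (x t 0 * M 1) ≤ k 1 0 * δ2 := by
      have hr : k 0 1 * x t 0 + k 2 1 * (x t 0 * M 1) = (k 0 1 + k 2 1 * M 1) * x t 0 := by ring
      rw [hr]; exact h2
    linarith [a1, a2, a3, a4]
  set δ4 := min (x 0 0) L4 with hδ4
  have hδ4pos : 0 < δ4 := lt_min (hx0 0) hL4pos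
  -- the compact box
  set lo : Fin 3 → ℝ := ![δ4, δ2, δ3] with hlo
  have hlopos : ∀ l, 0 < lo l := by
    intro l; fin_cases l <;> simp [hlo] <;> assumption
  have hbox : ∀ t ≥ (0:ℝ), x t ∈ Set.univ.pi (fun l => Icc (lo l) (M l)) := by
    intro t ht
    rw [Set.mem_univ_pi]
    intro l
    fin_cases l
    · exact ⟨by simpa [hlo] using (by simpa [hδ4] using habar t ht), hub t ht 0⟩
    · exact ⟨by simpa [hlo] using (by simpa [hδ2] using hbbar t ht), hub t ht 1⟩
    · exact ⟨by simpa [hlo] using (by simpa [hδ3] using hcbar t ht), hub t ht 2⟩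
  -- Step A : V along the trajectory gets below any positive level
  have stepA : ∀ η : ℝ, 0 < η → ∃ T, 0 ≤ T ∧ V T < η := by
    intro η hη
    by_contra hcon
    push_neg at hcon
    have hcon' : ∀ T ≥ (0:ℝ), η ≤ V T := fun T hT => hcon T hT
    set K' := (Set.univ.pi fun l => Icc (lo l) (M l)) ∩ {y | η ≤ Stmt14Aux.Vfun xstar y}
      with hK'
    have hK'comp : IsCompact K' :=
      (isCompact_univ_pi (fun l => isCompact_Icc)).inter_right
        (isClosed_le continuous_const (Stmt14Aux.Vfun_cont xstar))
    have hmemx : ∀ t ≥ (0:ℝ), x t ∈ K' := fun t ht => ⟨hbox t ht, hcon' t ht⟩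
    have hK'ne : K'.Nonempty := ⟨x 0, hmemx 0 le_rfl⟩
    have hK'pos : ∀ y ∈ K', ∀ l, 0 < y l := by
      intro y hy l
      have h := hy.1
      rw [Set.mem_univ_pi] at h
      exact lt_of_lt_of_le (hlopos l) (h l).1
    have hcont : ContinuousOn Dx K' := fun y hy =>
      (Stmt14Aux.Dfun_contAt _ _ _ xstar hxs y (hK'pos y hy)).continuousWithinAt
    obtain ⟨y0, hy0K, hy0min⟩ := hK'comp.exists_isMinOn hK'ne hcont
    have hy0ne : ¬(y0 0 = xstar 0 ∧ y0 1 = xstar 1 ∧ y0 2 = xstar 2) := by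
      rintro ⟨f0, f1, f2⟩
      have hy0eq : y0 = xstar := by
        funext l; fin_cases l <;> assumption
      have h2 := hy0K.2
      rw [Set.mem_setOf_eq, hy0eq, Stmt14Aux.Vfun_self] at h2
      linarith
    have hm : 0 < Dx y0 :=
      Stmt14Aux.Dfun_pos hκ1 hκ2 hκ3 hxs (hK'pos y0 hy0K) hy0ne
    have hVd2 : ∀ t ≥ (0:ℝ), HasDerivAt (fun s => V s + Dx y0 * s)
        (-(Dx (x t)) + Dx y0) t := by
      intro t ht
      exact ((hVd t ht).add ((hasDerivAt_id t).const_mul (Dx y0))).congr_deriv (by ring)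
    have hdle : ∀ t ≥ (0:ℝ), -(Dx (x t)) + Dx y0 ≤ 0 := by
      intro t ht
      have := isMinOn_iff.1 hy0min (x t) (hmemx t ht)
      linarith
    have hdec := Stmt14Aux.decay _ _ hVd2 hdle
    set T := (V 0 + 1)/(Dx y0) with hT
    have hTpos : 0 ≤ T := by positivity
    have h5 := hdec 0 T le_rfl hTpos
    have h6 : Dx y0 * T = V 0 + 1 := by
      rw [hT]; field_simp
    have h7 : 0 ≤ V T := Stmt14Aux.Vfun_nonneg hxs (hxpos T hTpos)
    simp only [mul_zero, add_zero] at h5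
    linarith
  -- Step B : convergence
  rw [tendsto_pi_nhds]
  intro l
  rw [Metric.tendsto_atTop]
  intro ε hε
  by_cases hSne : ((Set.univ.pi fun l' => Icc (lo l') (M l')) ∩
      {y | ε ≤ |y l - xstar l|}).Nonempty
  · set S := (Set.univ.pi fun l' => Icc (lo l') (M l')) ∩ {y | ε ≤ |y l - xstar l|} with hS
    have hScomp : IsCompact S :=
      (isCompact_univ_pi (fun l' => isCompact_Icc)).inter_right
        (isClosed_le continuous_const (((continuous_apply l).sub continuous_const).abs))
    obtain ⟨y1, hy1S, hy1min⟩ := hScomp.exists_isMinOn hSne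
      (Stmt14Aux.Vfun_cont xstar).continuousOn
    have hy1pos : ∀ l', 0 < y1 l' := by
      intro l'
      have h := hy1S.1
      rw [Set.mem_univ_pi] at h
      exact lt_of_lt_of_le (hlopos l') (h l').1
    have hy1ne : y1 l ≠ xstar l := by
      intro h
      have h2 := hy1S.2
      rw [Set.mem_setOf_eq, h, sub_self, abs_zero] at h2
      linarith
    have hη0 : 0 < Stmt14Aux.Vfun xstar y1 := Stmt14Aux.Vfun_pos hxs hy1pos l hy1ne
    obtain ⟨T, hT0, hTV⟩ := stepA _ hη0
    refine ⟨T, fun t htT => ?_⟩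
    have ht0 : 0 ≤ t := le_trans hT0 htT
    have hVt : V t < Stmt14Aux.Vfun xstar y1 := lt_of_le_of_lt (hVdec T t hT0 htT) hTV
    rw [Real.dist_eq]
    by_contra habs
    push_neg at habs
    have hmem : x t ∈ S := ⟨hbox t ht0, habs⟩
    have := isMinOn_iff.1 hy1min (x t) hmem
    rw [hVdef] at hVt
    simp only at hVt
    linarith
  · refine ⟨0, fun t ht0 => ?_⟩
    rw [Real.dist_eq]
    by_contra habs
    push_neg at habs
    exact hSne ⟨x t, hbox t ht0, habs⟩
end
end
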